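/- arXiv:1906.09780 — 5 statements merged into one kernel-verified Lean document; each statement's English description precedes it below -/
import Mathlib

section
/- Let q be a prime power and v, k, d positive integers with d even and d ≤ 2k ≤ v. Let C be a (v, N, d; k)_q constant dimension code that contains a lifted MRD code of cardinality q^{(v−k)(k−d/2+1)} as a subcode. Then N ≤ q^{(v−k)(k−d/2+1)} + B_q(v, v−k, d; k). -/
set_option synthInstance.maxHeartbeats 1000000
set_option maxHeartbeats 1000000


/-- The subspace distance between two subspaces:
`d_s(U,W) = dim(U+W) - dim(U∩W)`. -/
noncomputable def subspaceDist {F V : Type*} [Field F] [AddCommGroup V] [Module F V]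
    (U W : Submodule F V) : ℕ :=
  Module.finrank F ↥(U ⊔ W) - Module.finrank F ↥(U ⊓ W)

/-- `C` is a constant dimension code of `k`-spaces in `F^v` with minimum
subspace distance at least `d`. -/
def IsCDCode (F : Type*) [Field F] (v k d : ℕ)
    (C : Finset (Submodule F (Fin v → F))) : Prop :=
  (∀ U ∈ C, Module.finrank F ↥U = k) ∧
  (∀ U ∈ C, ∀ U' ∈ C, U ≠ U' → d ≤ subspaceDist U U')

/-- `A_q(v,d;k)`: the maximum cardinality of a constant dimension code of
`k`-spaces in `F^v` with minimum subspace distance at least `d`. -/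
noncomputable def Aq (F : Type*) [Field F] (v d k : ℕ) : ℕ :=
  sSup {n | ∃ C : Finset (Submodule F (Fin v → F)), C.card = n ∧ IsCDCode F v k d C}

/-- `B_q(v1,v2,d;k)`: the maximum cardinality of a constant dimension code of
`k`-spaces in `F^{v1}` with minimum subspace distance at least `d` such that some
`v2`-space `W` intersects every codeword in dimension at least `d/2`. -/
noncomputable def Bq (F : Type*) [Field F] (v1 v2 d k : ℕ) : ℕ :=
  sSup {n | ∃ (C : Finset (Submodule F (Fin v1 → F))) (W : Submodule F (Fin v1 → F)),
    C.card = n ∧ IsCDCode F v1 k d C ∧ Module.finrank F ↥W = v2 ∧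
    (∀ U ∈ C, d / 2 ≤ Module.finrank F ↥(U ⊓ W))}

/-- The Gaussian binomial coefficient `[a choose b]_q`. -/
noncomputable def gaussBinom (q : ℚ) (a b : ℕ) : ℚ :=
  ∏ i ∈ Finset.range b, (q ^ (a - b + i + 1) - 1) / (q ^ (i + 1) - 1)

/-- The row space of the matrix `(I_k | A)`, viewed as a subspace of `F^v`. -/
noncomputable def rowSpanAug (F : Type*) [Field F] (k v : ℕ) (h : k ≤ v)
    (A : Matrix (Fin k) (Fin (v - k)) F) : Submodule F (Fin v → F) :=
  Submodule.span F (Set.range fun i : Fin k =>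
    Fin.append ((1 : Matrix (Fin k) (Fin k) F) i) (A i) ∘ Fin.cast (Nat.add_sub_cancel' h).symm)

open Module LinearMap Submodule Matrix

section Aux
variable {F : Type} [Field F] {k v : ℕ}

private lemma fin_append_add (u u' : Fin k → F) (w w' : Fin (v-k) → F) :
    Fin.append (u + u') (w + w') = Fin.append u w + Fin.append u' w' := by
  funext q
  cases q using Fin.addCases with
  | left j => simp
  | right j => simp

private lemma fin_append_smul (c : F) (u : Fin k → F) (w : Fin (v-k) → F) :
    Fin.append (c • u) (c • w) = c • Fin.append u w := by
  funext q
  cases q using Fin.addCases with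
  | left j => simp
  | right j => simp

variable (h : k ≤ v)

/-- `ρ_A y = (y | yA)` as a linear map. -/
noncomputable def rho (A : Matrix (Fin k) (Fin (v-k)) F) :
    (Fin k → F) →ₗ[F] (Fin v → F) where
  toFun y := Fin.append y (y ᵥ* A) ∘ Fin.cast (Nat.add_sub_cancel' h).symm
  map_add' y z := by
    show Fin.append (y+z) ((y+z) ᵥ* A) ∘ _ = _
    rw [Matrix.add_vecMul, fin_append_add]; rfl
  map_smul' c y := by
    show Fin.append (c • y) ((c • y) ᵥ* A) ∘ _ = _
    rw [Matrix.smul_vecMul, RingHom.id_apply, fin_append_smul]; rfl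

noncomputable def projL : (Fin v → F) →ₗ[F] (Fin k → F) :=
  LinearMap.funLeft F F (Fin.castLE h)

lemma proj_rho (A : Matrix (Fin k) (Fin (v-k)) F) (y : Fin k → F) :
    projL h (rho h A y) = y := by
  funext j
  show Fin.append y (y ᵥ* A) (Fin.cast (Nat.add_sub_cancel' h).symm (Fin.castLE h j)) = y j
  have : Fin.cast (Nat.add_sub_cancel' h).symm (Fin.castLE h j) = Fin.castAdd (v-k) j :=
    Fin.ext rfl
  rw [this, Fin.append_left]

lemma rho_last (A : Matrix (Fin k) (Fin (v-k)) F) (y : Fin k → F) (i : Fin (v-k)) :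
    rho h A y (Fin.cast (Nat.add_sub_cancel' h) (Fin.natAdd k i)) = (y ᵥ* A) i := by
  show Fin.append y (y ᵥ* A) (Fin.cast (Nat.add_sub_cancel' h).symm
    (Fin.cast (Nat.add_sub_cancel' h) (Fin.natAdd k i))) = _
  have : Fin.cast (Nat.add_sub_cancel' h).symm
      (Fin.cast (Nat.add_sub_cancel' h) (Fin.natAdd k i)) = Fin.natAdd k i := Fin.ext rfl
  rw [this, Fin.append_right]

lemma rho_injective (A : Matrix (Fin k) (Fin (v-k)) F) :
    Function.Injective (rho h A) :=
  Function.LeftInverse.injective (g := projL h) (proj_rho h A)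

lemma rowSpanAug_eq_range (A : Matrix (Fin k) (Fin (v-k)) F) :
    rowSpanAug F k v h A = LinearMap.range (rho h A) := by
  have hgen : ∀ i : Fin k,
      (Fin.append ((1 : Matrix (Fin k) (Fin k) F) i) (A i) ∘
        Fin.cast (Nat.add_sub_cancel' h).symm) = rho h A (Pi.single i 1) := by
    intro i
    have h1 : (1 : Matrix (Fin k) (Fin k) F) i = Pi.single i 1 := by
      funext j
      simp [Matrix.one_apply, Pi.single_apply, eq_comm]
    show _ = Fin.append (Pi.single i 1) (Pi.single i 1 ᵥ* A) ∘ _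
    rw [Matrix.single_one_vecMul, h1]; rfl
  unfold rowSpanAug
  have hfun : (fun i : Fin k =>
      Fin.append ((1 : Matrix (Fin k) (Fin k) F) i) (A i) ∘
        Fin.cast (Nat.add_sub_cancel' h).symm)
      = (rho h A) ∘ (Pi.basisFun F (Fin k)) := by
    funext i
    show _ = rho h A (Pi.basisFun F (Fin k) i)
    rw [Pi.basisFun_apply]
    exact hgen i
  rw [hfun, Set.range_comp, ← Submodule.map_span, Basis.span_eq, Submodule.map_top]

lemma mem_rowSpanAug_iff (A : Matrix (Fin k) (Fin (v-k)) F) (x : Fin v → F) :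
    x ∈ rowSpanAug F k v h A ↔ x = rho h A (projL h x) := by
  rw [rowSpanAug_eq_range]
  constructor
  · rintro ⟨y, rfl⟩; rw [proj_rho]
  · intro hx; exact ⟨_, hx.symm⟩

lemma finrank_rowSpanAug (A : Matrix (Fin k) (Fin (v-k)) F) :
    finrank F (rowSpanAug F k v h A) = k := by
  rw [rowSpanAug_eq_range, finrank_range_of_inj (rho_injective h A), finrank_fin_fun]

lemma finrank_ker_proj : finrank F (LinearMap.ker (projL (F := F) h)) = v - k := by
  have hsurj : Function.Surjective (projL (F := F) h) :=
    LinearMap.funLeft_surjective_of_injective F F _ (Fin.castLE_injective h)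
  have := LinearMap.finrank_range_add_finrank_ker (projL (F := F) h)
  rw [LinearMap.range_eq_top.mpr hsurj, finrank_top, finrank_fin_fun, finrank_fin_fun] at this
  omega

variable [Fintype F]

lemma key_inter (δ : ℕ) (hδpos : 0 < δ) (hδk : δ ≤ k)
    (C : Finset (Submodule F (Fin v → F))) (hC : IsCDCode F v k (2*δ) C)
    (M : Finset (Matrix (Fin k) (Fin (v - k)) F))
    (hMcard : M.card = (Fintype.card F) ^ ((v - k) * (k - δ + 1)))
    (hMrank : ∀ A ∈ M, ∀ B ∈ M, A ≠ B → δ ≤ (A - B).rank)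
    (hMC : ∀ A ∈ M, rowSpanAug F k v h A ∈ C)
    (U : Submodule F (Fin v → F)) (hU : U ∈ C)
    (hUnot : ∀ A ∈ M, U ≠ rowSpanAug F k v h A) :
    δ ≤ finrank F ↥(U ⊓ LinearMap.ker (projL h)) := by
  by_contra hlt
  push_neg at hlt
  set W := LinearMap.ker (projL (F := F) h) with hW
  set m := k - δ + 1 with hm
  have hUk : finrank F U = k := hC.1 U hU
  set g : U →ₗ[F] (Fin k → F) := (projL h).comp U.subtype with hg
  have hker : finrank F (LinearMap.ker g) = finrank F ↥(U ⊓ W) := by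
    have h1 : LinearMap.ker g = Submodule.comap U.subtype (U ⊓ W) := by
      rw [hg, LinearMap.ker_comp]
      ext x
      simp [hW, LinearMap.mem_ker, Submodule.mem_comap, x.2]
    rw [h1]
    exact (Submodule.comapSubtypeEquivOfLe (inf_le_left : U ⊓ W ≤ U)).finrank_eq
  have hrange : m ≤ finrank F (LinearMap.range g) := by
    have h2 := LinearMap.finrank_range_add_finrank_ker g
    rw [hker] at h2
    omega
  obtain ⟨y', hy'⟩ := exists_linearIndependent_of_le_finrank (R := F) hrange
  set y : Fin m → (Fin k → F) := fun j => (y' j : Fin k → F) with hydef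
  have hy : LinearIndependent F y :=
    hy'.map' (LinearMap.range g).subtype (Submodule.ker_subtype _)
  choose u hu using fun j => (y' j).2
  -- u : Fin m → U with g (u j) = y' j
  have hproj : ∀ j, projL h ((u j : Fin v → F)) = y j := fun j => hu j
  set Y : Matrix (Fin m) (Fin k) F := Matrix.of y with hYdef
  set Z : Matrix (Fin m) (Fin (v - k)) F :=
    Matrix.of (fun j i => (u j : Fin v → F)
      (Fin.cast (Nat.add_sub_cancel' h) (Fin.natAdd k i))) with hZdef
  have hrowmul : ∀ (A : Matrix (Fin k) (Fin (v-k)) F) (j : Fin m), (Y * A) j = y j ᵥ* A := by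
    intro A j
    funext i
    simp [Matrix.mul_apply, Matrix.vecMul, dotProduct, hYdef]
  set f : {A // A ∈ M} → Matrix (Fin m) (Fin (v - k)) F := fun A => Y * A.1 with hfdef
  have hfinj : Function.Injective f := by
    rintro ⟨A, hA⟩ ⟨B, hB⟩ hAB
    simp only [hfdef] at hAB
    ext1
    by_contra hne
    have hrk := hMrank A hA B hB hne
    set D := A - B with hD
    have hYD : ∀ j, y j ᵥ* D = 0 := by
      intro j
      rw [hD, Matrix.vecMul_sub, ← hrowmul A j, ← hrowmul B j, hAB, sub_self]
    have hyker : ∀ j, y j ∈ LinearMap.ker (Dᵀ.mulVecLin) := by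
      intro j
      rw [LinearMap.mem_ker, Matrix.mulVecLin_apply, Matrix.mulVec_transpose, hYD]
    set y2 : Fin m → LinearMap.ker (Dᵀ.mulVecLin) := fun j => ⟨y j, hyker j⟩ with hy2
    have hy2li : LinearIndependent F y2 :=
      LinearIndependent.of_comp (LinearMap.ker (Dᵀ.mulVecLin)).subtype hy
    have hcard := hy2li.fintype_card_le_finrank
    rw [Fintype.card_fin] at hcard
    have hrn := LinearMap.finrank_range_add_finrank_ker (Dᵀ.mulVecLin)
    rw [Module.finrank_fin_fun] at hrn
    have hrkD : D.rank = Dᵀ.rank := (Matrix.rank_transpose D).symm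
    have : Dᵀ.rank = finrank F (LinearMap.range (Dᵀ.mulVecLin)) := rfl
    omega
  have hfsurj : Function.Surjective f := by
    have hcard : Fintype.card {A // A ∈ M} = Fintype.card (Matrix (Fin m) (Fin (v - k)) F) := by
      have : Fintype.card (Matrix (Fin m) (Fin (v - k)) F)
          = Fintype.card F ^ (m * (v - k)) := by
        have h3 : Fintype.card (Matrix (Fin m) (Fin (v - k)) F)
            = Fintype.card (Fin m → Fin (v - k) → F) :=
          Fintype.card_congr (Equiv.refl _)
        rw [h3]
        simp only [Fintype.card_fun, Fintype.card_fin, pow_mul]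
        exact pow_right_comm _ _ _
      rw [Fintype.card_coe, hMcard, this, mul_comm]
    exact ((Fintype.bijective_iff_injective_and_card f).mpr ⟨hfinj, hcard⟩).surjective
  obtain ⟨⟨A, hAM⟩, hYA⟩ := hfsurj Z
  have hYA' : Y * A = Z := hYA
  have hmem : ∀ j, (u j : Fin v → F) ∈ rowSpanAug F k v h A := by
    intro j
    rw [mem_rowSpanAug_iff, hproj j]
    funext p
    have hp : p = Fin.cast (Nat.add_sub_cancel' h)
        (Fin.cast (Nat.add_sub_cancel' h).symm p) := Fin.ext rfl
    rw [hp]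
    generalize (Fin.cast (Nat.add_sub_cancel' h).symm p) = p0
    cases p0 using Fin.addCases with
    | left j0 =>
      have hcast : Fin.cast (Nat.add_sub_cancel' h) (Fin.castAdd (v - k) j0)
          = Fin.castLE h j0 := Fin.ext rfl
      rw [hcast]
      have h4 : rho h A (y j) (Fin.castLE h j0) = projL h (rho h A (y j)) j0 := rfl
      rw [h4, proj_rho]
      exact congrFun (hproj j).symm j0 ▸ rfl
    | right i0 =>
      rw [rho_last]
      have h5 : (u j : Fin v → F) (Fin.cast (Nat.add_sub_cancel' h) (Fin.natAdd k i0))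
          = Z j i0 := rfl
      rw [h5, ← hYA', hrowmul]
  have hulin : LinearIndependent F (fun j => (u j : Fin v → F)) := by
    apply LinearIndependent.of_comp (projL h)
    have : (projL h) ∘ (fun j => (u j : Fin v → F)) = y := by
      funext j; exact hproj j
    rw [this]; exact hy
  set X := rowSpanAug F k v h A with hX
  have hTle : Submodule.span F (Set.range (fun j => (u j : Fin v → F))) ≤ U ⊓ X := by
    rw [Submodule.span_le]
    rintro _ ⟨j, rfl⟩
    exact ⟨(u j).2, hmem j⟩
  have hTrank : finrank F (Submodule.span F (Set.range (fun j => (u j : Fin v → F)))) = m := by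
    rw [finrank_span_eq_card hulin, Fintype.card_fin]
  have hm_le : m ≤ finrank F ↥(U ⊓ X) := hTrank ▸ Submodule.finrank_mono hTle
  have hXC : X ∈ C := hMC A hAM
  have hne : U ≠ X := hUnot A hAM
  have hd := hC.2 U hU X hXC hne
  have hsum := Submodule.finrank_sup_add_finrank_inf_eq U X
  have hXk : finrank F X = k := finrank_rowSpanAug h A
  unfold subspaceDist at hd
  omega

end Aux

/-- Proposition 8 of the paper. A `(v,N,d;k)_q` code containing a lifted
MRD code of cardinality `q^{(v-k)(k-d/2+1)}` satisfies
`N ≤ q^{(v-k)(k-d/2+1)} + B_q(v, v-k, d; k)`. -/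
theorem stmt_3 (q : ℕ) (F : Type) [Field F] [Fintype F] (hq : Fintype.card F = q)
    (v k d : ℕ) (hdeven : 2 ∣ d) (hdpos : 0 < d) (hdk : d ≤ 2 * k) (hkv : 2 * k ≤ v)
    (C : Finset (Submodule F (Fin v → F))) (hC : IsCDCode F v k d C)
    (M : Finset (Matrix (Fin k) (Fin (v - k)) F))
    (hMcard : M.card = q ^ ((v - k) * (k - d / 2 + 1)))
    (hMrank : ∀ A ∈ M, ∀ B ∈ M, A ≠ B → d / 2 ≤ (A - B).rank)
    (hMC : ∀ A ∈ M, rowSpanAug F k v (by omega) A ∈ C) :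
    C.card ≤ q ^ ((v - k) * (k - d / 2 + 1)) + Bq F v (v - k) d k := by
  subst hq
  obtain ⟨δ, rfl⟩ := hdeven
  have hkv' : k ≤ v := by omega
  have hδ2 : 2 * δ / 2 = δ := by omega
  rw [hδ2] at hMcard hMrank ⊢
  have hMC' : ∀ A ∈ M, rowSpanAug F k v hkv' A ∈ C := hMC
  classical
  set img := M.image (rowSpanAug F k v hkv') with himg
  have himgsub : img ⊆ C := by
    intro X hX
    obtain ⟨A, hA, rfl⟩ := Finset.mem_image.mp hX
    exact hMC' A hA
  set C' := C \ img with hC'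
  have himgle : img.card ≤ M.card := Finset.card_image_le
  have hsd : C'.card = C.card - img.card := Finset.card_sdiff_of_subset himgsub
  have hsub2 := Finset.card_le_card himgsub
  suffices hB : C'.card ≤ Bq F v (v - k) (2 * δ) k by
    have : M.card = Fintype.card F ^ ((v - k) * (k - δ + 1)) := hMcard
    omega
  apply le_csSup
  · haveI : Finite (Submodule F (Fin v → F)) :=
      Finite.of_injective _ (SetLike.coe_injective (A := Submodule F (Fin v → F)))
    haveI := Fintype.ofFinite (Submodule F (Fin v → F))
    refine ⟨Fintype.card (Submodule F (Fin v → F)), ?_⟩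
    rintro n ⟨Cn, Wn, rfl, _⟩
    exact Finset.card_le_univ Cn
  · refine ⟨C', LinearMap.ker (projL hkv'), rfl, ?_, finrank_ker_proj hkv', ?_⟩
    · exact ⟨fun U hU => hC.1 U (Finset.sdiff_subset hU),
        fun U hU U' hU' => hC.2 U (Finset.sdiff_subset hU) U' (Finset.sdiff_subset hU')⟩
    · intro U hU
      rw [hδ2]
      have hUC : U ∈ C := Finset.sdiff_subset hU
      have hUnot : ∀ A ∈ M, U ≠ rowSpanAug F k v hkv' A := by
        intro A hA heq
        have : U ∈ img := Finset.mem_image.mpr ⟨A, hA, heq.symm⟩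
        exact (Finset.mem_sdiff.mp hU).2 this
      exact key_inter hkv' δ (by omega) (by omega) C hC M hMcard hMrank hMC' U hUC hUnot
end

section
/- Let q be a prime power and let v1, v2, k, d be integers with d even, 2 ≤ d ≤ 2k, v1 ≥ k, and d/2 ≤ v2 ≤ v1. If k < d and v1 ≥ v2 · k, then B_q(v1, v2, d; k) = A_q(v2, 2d − 2k; d/2). -/
open Module Submodule Function Polynomial

set_option maxHeartbeats 1000000
set_option synthInstance.maxHeartbeats 400000

section Helpers

lemma exists_le_finrank_eq' {F V : Type*} [Field F] [AddCommGroup V] [Module F V]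
    [FiniteDimensional F V] (S : Submodule F V) (r : ℕ)
    (h : r ≤ finrank F S) : ∃ X : Submodule F V, X ≤ S ∧ finrank F X = r := by
  classical
  let b := finBasis F S
  refine ⟨map S.subtype (span F (Set.range (b ∘ Fin.castLE h))), map_subtype_le _ _, ?_⟩
  rw [← LinearEquiv.finrank_eq (Submodule.equivMapOfInjective S.subtype S.injective_subtype _),
    finrank_span_eq_card (b.linearIndependent.comp _ (Fin.castLE_injective h))]
  simp

lemma subspaceDist_formula' (F V : Type*) [Field F] [AddCommGroup V] [Module F V]
    [FiniteDimensional F V] (U U' : Submodule F V) :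
    subspaceDist U U' = finrank F U + finrank F U' - 2 * finrank F ↥(U ⊓ U') := by
  have h1 := Submodule.finrank_sup_add_finrank_inf_eq U U'
  have h2 : finrank F ↥(U ⊓ U') ≤ finrank F ↥(U ⊔ U') :=
    Submodule.finrank_mono (le_trans inf_le_left le_sup_left)
  unfold subspaceDist; omega

instance instFiniteSubmodule' {F V : Type*} [Field F] [AddCommGroup V] [Module F V]
    [Finite V] : Finite (Submodule F V) :=
  Finite.of_injective (fun S => (S : Set V)) SetLike.coe_injective

lemma finrank_map_inj' {F : Type} [Field F] {M N : Type*} [AddCommGroup M] [Module F M]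
    [AddCommGroup N] [Module F N] (f : M →ₗ[F] N) (hf : Injective f) (p : Submodule F M) :
    finrank F ↥(Submodule.map f p) = finrank F ↥p :=
  (LinearEquiv.finrank_eq (Submodule.equivMapOfInjective f hf p)).symm

lemma exists_injective_linearMap' (F : Type) [Field F] (M N : Type*) [AddCommGroup M]
    [Module F M] [AddCommGroup N] [Module F N] [FiniteDimensional F M] [FiniteDimensional F N]
    (h : finrank F M ≤ finrank F N) : ∃ f : M →ₗ[F] N, Injective f := by
  classical
  let bM := finBasis F M
  let bN := finBasis F N
  refine ⟨bM.constr F (fun i => bN (Fin.castLE h i)), ?_⟩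
  have hli : LinearIndependent F (bN ∘ Fin.castLE h) :=
    bN.linearIndependent.comp _ (Fin.castLE_injective h)
  rw [injective_iff_map_eq_zero]
  intro x hx
  rw [Basis.constr_apply_fintype] at hx
  have := linearIndependent_iff'.mp hli Finset.univ (fun i => bM.equivFun x i) (by
    simpa using hx)
  have hz : bM.equivFun x = 0 := funext fun i => this i (Finset.mem_univ i)
  have := bM.equivFun.injective (by simpa using hz)
  simpa using this

noncomputable def padlow' (F : Type) [Field F] (v2 v1 : ℕ) :
    (Fin v2 → F) →ₗ[F] (Fin v1 → F) where
  toFun x := fun i => if h : (i : ℕ) < v2 then x ⟨i, h⟩ else 0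
  map_add' x y := by funext i; by_cases h : (i:ℕ) < v2 <;> simp [h]
  map_smul' c x := by funext i; by_cases h : (i:ℕ) < v2 <;> simp [h]

noncomputable def rh' (F : Type) [Field F] (v2 v1 : ℕ) (h : v2 ≤ v1) :
    (Fin v1 → F) →ₗ[F] (Fin v2 → F) :=
  LinearMap.funLeft F F (Fin.castLE h)

lemma rh_padlow' (F : Type) [Field F] (v2 v1 : ℕ) (h : v2 ≤ v1) (x : Fin v2 → F) :
    rh' F v2 v1 h (padlow' F v2 v1 x) = x := by
  funext i
  simp [rh', padlow', LinearMap.funLeft, Fin.castLE, i.isLt]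

lemma padlow'_injective (F : Type) [Field F] (v2 v1 : ℕ) (h : v2 ≤ v1) :
    Injective (padlow' F v2 v1) :=
  Function.LeftInverse.injective (rh_padlow' F v2 v1 h)

lemma rh'_surjective (F : Type) [Field F] (v2 v1 : ℕ) (h : v2 ≤ v1) :
    Surjective (rh' F v2 v1 h) :=
  fun x => ⟨padlow' F v2 v1 x, rh_padlow' F v2 v1 h x⟩

lemma finrank_ker_rh' (F : Type) [Field F] (v2 v1 : ℕ) (h : v2 ≤ v1) :
    finrank F ↥(LinearMap.ker (rh' F v2 v1 h)) = v1 - v2 := by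
  have h1 := LinearMap.finrank_range_add_finrank_ker (rh' F v2 v1 h)
  rw [LinearMap.range_eq_top.mpr (rh'_surjective F v2 v1 h)] at h1
  simp only [finrank_top, Module.finrank_pi, Fintype.card_fin] at h1
  omega

lemma finrank_range_padlow' (F : Type) [Field F] (v2 v1 : ℕ) (h : v2 ≤ v1) :
    finrank F ↥(LinearMap.range (padlow' F v2 v1)) = v2 := by
  rw [LinearMap.finrank_range_of_inj (padlow'_injective F v2 v1 h)]
  simp [Module.finrank_pi]

lemma range_padlow'_inf_ker (F : Type) [Field F] (v2 v1 : ℕ) (h : v2 ≤ v1) :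
    LinearMap.range (padlow' F v2 v1) ⊓ LinearMap.ker (rh' F v2 v1 h) = ⊥ := by
  rw [eq_bot_iff]
  rintro x ⟨⟨y, rfl⟩, hk⟩
  have : y = 0 := by
    have := rh_padlow' F v2 v1 h y
    rw [LinearMap.mem_ker.mp hk] at this
    exact this.symm
  simp [this]

lemma inf_sup_decomp' {F : Type} [Field F] {V : Type*} [AddCommGroup V] [Module F V]
    {W C A A' B B' : Submodule F V} (hWC : W ⊓ C = ⊥)
    (hA : A ≤ W) (hA' : A' ≤ W) (hB : B ≤ C) (hB' : B' ≤ C) :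
    (A ⊔ B) ⊓ (A' ⊔ B') = (A ⊓ A') ⊔ (B ⊓ B') := by
  apply le_antisymm
  · intro x hx
    rw [Submodule.mem_inf] at hx
    obtain ⟨hx1, hx2⟩ := hx
    obtain ⟨a, ha, b, hb, rfl⟩ := Submodule.mem_sup.mp hx1
    obtain ⟨a', ha', b', hb', hab⟩ := Submodule.mem_sup.mp hx2
    have hthis : a + b = a' + b' := hab.symm
    have hd : a - a' = b' - b := by
      rw [sub_eq_sub_iff_add_eq_add]
      exact hthis.trans (add_comm a' b')
    have hmem : a - a' ∈ W ⊓ C := by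
      rw [Submodule.mem_inf]
      constructor
      · exact sub_mem (hA ha) (hA' ha')
      · rw [hd]; exact sub_mem (hB' hb') (hB hb)
    rw [hWC, Submodule.mem_bot, sub_eq_zero] at hmem
    have hb'b : b = b' := by
      rw [← hmem] at hthis
      exact add_left_cancel hthis
    refine Submodule.mem_sup.mpr ⟨a, ?_, b, ?_, rfl⟩
    · rw [Submodule.mem_inf]; exact ⟨ha, hmem ▸ ha'⟩
    · rw [Submodule.mem_inf]; exact ⟨hb, hb'b ▸ hb'⟩
  · exact sup_le (le_inf (le_trans inf_le_left le_sup_left) (le_trans inf_le_right le_sup_left))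
      (le_inf (le_trans inf_le_left le_sup_right) (le_trans inf_le_right le_sup_right))

noncomputable def Bfam' (F : Type) [Field F] (v2 j : ℕ) :
    Submodule F (Fin v2 → F) → (Fin j → (Fin v2 → F)) :=
  fun V => if h : finrank F ↥V = j then
    (fun i => ((Module.finBasisOfFinrankEq F ↥V h) i : Fin v2 → F)) else 0

lemma Bfam'_span (F : Type) [Field F] (v2 j : ℕ) (V : Submodule F (Fin v2 → F))
    (h : finrank F ↥V = j) :
    Submodule.span F (Set.range (Bfam' F v2 j V)) = V := by
  have hB : Bfam' F v2 j V =
      (fun i => ((Module.finBasisOfFinrankEq F ↥V h) i : Fin v2 → F)) := dif_pos h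
  rw [hB]
  have : (fun i => ((Module.finBasisOfFinrankEq F ↥V h) i : Fin v2 → F)) =
      V.subtype ∘ (Module.finBasisOfFinrankEq F ↥V h) := rfl
  rw [this, Set.range_comp, ← Submodule.map_span, Basis.span_eq, Submodule.map_top,
    Submodule.range_subtype]

lemma Bfam'_ne_zero (F : Type) [Field F] (v2 j : ℕ) (hj : 1 ≤ j)
    (V : Submodule F (Fin v2 → F)) (h : finrank F ↥V = j) : Bfam' F v2 j V ≠ 0 := by
  have hB : Bfam' F v2 j V =
      (fun i => ((Module.finBasisOfFinrankEq F ↥V h) i : Fin v2 → F)) := dif_pos h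
  rw [hB]
  intro hz
  have h0 : ((Module.finBasisOfFinrankEq F ↥V h) ⟨0, hj⟩ : Fin v2 → F) = 0 := congrFun hz _
  exact (Module.finBasisOfFinrankEq F ↥V h).ne_zero ⟨0, hj⟩ (by
    exact_mod_cast Subtype.coe_injective (h0.trans rfl))

lemma span_range_smul_eq' (F : Type) [Field F] {M : Type*} [AddCommGroup M] [Module F M]
    {ι : Type*} (f : ι → M) (c : F) (hc : c ≠ 0) :
    Submodule.span F (Set.range (c • f)) = Submodule.span F (Set.range f) := by
  apply le_antisymm <;> rw [Submodule.span_le] <;> rintro x ⟨i, rfl⟩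
  · exact Submodule.smul_mem _ c (Submodule.subset_span ⟨i, rfl⟩)
  · have : f i = c⁻¹ • (c • f) i := by
      simp [smul_smul, inv_mul_cancel₀ hc]
    rw [this]
    exact Submodule.smul_mem _ _ (Submodule.subset_span ⟨i, rfl⟩)

lemma exists_field_ext (F : Type) [Field F] [Fintype F] (e : ℕ) (he : e ≠ 0) :
    ∃ (L : Type) (_ : Field L) (_ : Algebra F L),
      FiniteDimensional F L ∧ Module.finrank F L = e := by
  classical
  set p := ringChar F with hpdef
  haveI : CharP F p := ringChar.charP F
  obtain ⟨s, hp, hs⟩ := FiniteField.card F p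
  set n := (s : ℕ) * e with hn
  have hn0 : n ≠ 0 := by
    have := s.pos
    simp only [hn]; positivity
  have hp1 : 1 < p := hp.one_lt
  set g : F[X] := X ^ p ^ n - X with hg
  let K := g.SplittingField
  haveI : FiniteDimensional F K := by dsimp only [K]; infer_instance
  haveI : Finite K := Module.finite_of_finite F
  haveI : Fintype K := Fintype.ofFinite K
  haveI : CharP K p := (Algebra.charP_iff F K p).mp ‹_›
  have aux : g ≠ 0 := FiniteField.X_pow_card_pow_sub_X_ne_zero _ hn0 hp1
  have key : Fintype.card (g.rootSet K) = g.natDegree :=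
    card_rootSet_eq_natDegree (galois_poly_separable p _ (dvd_pow_self p hn0))
      (SplittingField.splits g)
  have nat_degree_eq : g.natDegree = p ^ n :=
    FiniteField.X_pow_card_pow_sub_X_natDegree_eq _ hn0 hp1
  rw [nat_degree_eq] at key
  have huniv : g.rootSet K = Set.univ := by
    rw [Set.eq_univ_iff_forall]
    suffices h : ∀ (x) (_ : x ∈ (⊤ : Subalgebra F K)), x ∈ g.rootSet K by simpa using h
    rw [← SplittingField.adjoin_rootSet]
    simp_rw [Algebra.mem_adjoin_iff]
    intro x hx
    haveI : Fact p.Prime := ⟨hp⟩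
    haveI : ExpChar K p := ExpChar.prime hp
    have hroot : ∀ z : K, ((aeval z) g = 0 ↔ z ^ p ^ n = z) := by
      intro z; simp [g, sub_eq_zero]
    have hφ : ∀ z : K, z ^ p ^ n = iterateFrobenius K p n z := fun z => rfl
    refine Subring.closure_induction ?_ ?_ ?_ ?_ ?_ ?_ hx <;>
      simp_rw [mem_rootSet_of_ne aux, hroot]
    · rintro x (⟨r, rfl⟩ | hx)
      · have hr : r ^ p ^ n = r := by
          rw [hn, pow_mul, ← hs, FiniteField.pow_card_pow]
        rw [← map_pow, hr]
      · rw [mem_rootSet_of_ne aux, hroot] at hx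
        exact hx
    · simp [hφ]
    · simp [hφ]
    · intro x y _ _ hx1 hy1
      simp only [hφ, map_add] at *
      rw [hx1, hy1]
    · intro x _ hx1
      simp only [hφ, map_neg] at *
      rw [hx1]
    · intro x y _ _ hx1 hy1
      simp only [hφ, map_mul] at *
      rw [hx1, hy1]
  simp_rw [huniv, ← Fintype.ofEquiv_card (Equiv.Set.univ _)] at key
  have hcard : Fintype.card K = p ^ n := by
    rw [← key]; congr!
  have hfr : Fintype.card K = Fintype.card F ^ finrank F K := card_eq_pow_finrank
  rw [hcard, hs, ← pow_mul] at hfr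
  have : n = (s:ℕ) * finrank F K := Nat.pow_right_injective hp.two_le hfr
  refine ⟨K, inferInstance, inferInstance, ‹FiniteDimensional F K›, ?_⟩
  exact (Nat.eq_of_mul_eq_mul_left s.pos (hn ▸ this)).symm

end Helpers

lemma exists_spread' (F : Type) [Field F] [Fintype F] (v1 v2 j e : ℕ) (hj : 1 ≤ j)
    (hjv2 : j ≤ v2) (hej : e < j) (hdim : v2 * (j + e) ≤ v1)
    (Cc : Submodule F (Fin v1 → F)) (hCc : finrank F ↥Cc = v1 - v2) :
    ∃ E : Submodule F (Fin v2 → F) → Submodule F (Fin v1 → F),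
      (∀ V : Submodule F (Fin v2 → F), finrank F ↥V = j → E V ≤ Cc ∧ finrank F ↥(E V) = e) ∧
      (∀ V V' : Submodule F (Fin v2 → F), finrank F ↥V = j → finrank F ↥V' = j → V ≠ V' →
        E V ⊓ E V' = ⊥) := by
  classical
  have hv2pos : 1 ≤ v2 := le_trans hj hjv2
  have hv2v1 : v2 ≤ v1 := by
    have h1 : v2 * 1 ≤ v2 * (j + e) := Nat.mul_le_mul_left v2 (by omega)
    omega
  have hMrank : finrank F (Fin j → (Fin v2 → F)) = j * v2 := by
    rw [Module.finrank_pi_fintype]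
    simp [Module.finrank_pi, Finset.sum_const, Finset.card_univ]
  rcases Nat.eq_zero_or_pos e with he0 | hepos
  · -- e = 0
    subst he0
    exact ⟨fun _ => ⊥, fun V _ => ⟨bot_le, by simp⟩, fun _ _ _ _ _ => by simp⟩
  rcases eq_or_lt_of_le (show 1 ≤ e from hepos) with he1 | he2
  · -- e = 1
    have he1 : e = 1 := he1.symm
    subst he1
    have hfr : finrank F (Fin j → (Fin v2 → F)) ≤ finrank F ↥Cc := by
      rw [hMrank, hCc]
      have : v2 * (j + 1) = v2 * j + v2 := by ring
      have h2 : j * v2 = v2 * j := Nat.mul_comm j v2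
      omega
    obtain ⟨Θ, hΘ⟩ := exists_injective_linearMap' F (Fin j → (Fin v2 → F)) ↥Cc hfr
    set f : (Fin j → (Fin v2 → F)) →ₗ[F] (Fin v1 → F) := Cc.subtype ∘ₗ Θ with hf
    have hfinj : Injective f := Cc.injective_subtype.comp hΘ
    refine ⟨fun V => Submodule.map f (F ∙ (Bfam' F v2 j V)), fun V hV => ⟨?_, ?_⟩, ?_⟩
    · intro x hx
      obtain ⟨y, _, rfl⟩ := hx
      simp only [f, LinearMap.coe_comp, Function.comp_apply]
      exact (Θ y).2
    · rw [finrank_map_inj' f hfinj, finrank_span_singleton (Bfam'_ne_zero F v2 j hj V hV)]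
    · intro V V' hV hV' hne
      rw [eq_bot_iff]
      intro z hz
      rw [Submodule.mem_inf] at hz
      obtain ⟨hz1, hz2⟩ := hz
      rw [Submodule.mem_map] at hz1 hz2
      obtain ⟨u, hu, rfl⟩ := hz1
      obtain ⟨u', hu', hzu'⟩ := hz2
      have huu' : u = u' := hfinj hzu'.symm
      subst huu'
      rw [Submodule.mem_span_singleton] at hu hu'
      obtain ⟨c, rfl⟩ := hu
      obtain ⟨c', hc'⟩ := hu'
      rcases eq_or_ne c 0 with rfl | hc0
      · simp
      exfalso
      have hc'0 : c' ≠ 0 := by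
        rintro rfl
        rw [zero_smul] at hc'
        exact Bfam'_ne_zero F v2 j hj V hV (by
          have := smul_eq_zero.mp hc'.symm
          tauto)
      apply hne
      have hBV' : Bfam' F v2 j V' = (c'⁻¹ * c) • Bfam' F v2 j V := by
        rw [mul_smul, ← hc', ← mul_smul, inv_mul_cancel₀ hc'0, one_smul]
      have hsc : (c'⁻¹ * c) ≠ 0 := by
        simp [hc0, hc'0]
      rw [← Bfam'_span F v2 j V hV, ← Bfam'_span F v2 j V' hV', hBV',
        span_range_smul_eq' F _ _ hsc]
  · -- e ≥ 2
    obtain ⟨L, hLf, hLa, hLfd, hLrank⟩ := exists_field_ext F e (by omega)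
    letI := hLf; letI := hLa; haveI := hLfd
    set n := v2 * j with hn
    set t' := (n + e - 1) / e with ht'
    have hdm : e * t' + (n + e - 1) % e = n + e - 1 := by
      rw [ht']; exact Nat.div_add_mod (n + e - 1) e
    have hmod := Nat.mod_lt (n + e - 1) (y := e) (by omega)
    have hts1 : n ≤ e * t' := by omega
    have hts2 : e * t' ≤ n + e - 1 := by omega
    have hA3 : v2 * (j + e) = v2 * j + v2 * e := by ring
    have hA4 : 2 * e - 1 + v2 ≤ v2 * e := by
      obtain ⟨m, rfl⟩ : ∃ m, e = m + 2 := ⟨e - 2, by omega⟩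
      have k1 : v2 * (m + 2) = v2 * m + 2 * v2 := by ring
      have k2 : (m + 3) * m ≤ v2 * m := Nat.mul_le_mul_right _ (by omega)
      have k3 : (m + 3) * m = m * m + 3 * m := by ring
      omega
    have hcomm1 : j * v2 = v2 * j := by ring
    have hcomm2 : t' * e = e * t' := by ring
    have hroom : e + e * t' ≤ v1 - v2 := by omega
    have hpirank : finrank F (Fin t' → L) = t' * e := by
      rw [Module.finrank_pi_fintype]
      simp [hLrank, Finset.sum_const, Finset.card_univ, smul_eq_mul]
    obtain ⟨pack, hpack⟩ := exists_injective_linearMap' F (Fin j → (Fin v2 → F))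
      (Fin t' → L) (by rw [hMrank, hpirank]; omega)
    have hNLrank : finrank F (L × (Fin t' → L)) = e + t' * e := by
      rw [Module.finrank_prod, hLrank, hpirank]
    obtain ⟨Θ, hΘ⟩ := exists_injective_linearMap' F (L × (Fin t' → L)) ↥Cc (by
      rw [hNLrank, hCc]
      omega)
    set f : (L × (Fin t' → L)) →ₗ[F] (Fin v1 → F) := Cc.subtype ∘ₗ Θ with hfdef
    have hfinj : Injective f := Cc.injective_subtype.comp hΘ
    let xv : Submodule F (Fin v2 → F) → (L × (Fin t' → L)) := fun V =>
      ((1 : L), pack (Bfam' F v2 j V))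
    let φ : Submodule F (Fin v2 → F) → (L →ₗ[F] (L × (Fin t' → L))) := fun V =>
      { toFun := fun c => c • xv V
        map_add' := fun a b => add_smul a b _
        map_smul' := fun a c => by simp [smul_assoc] }
    have hφapp : ∀ V c, φ V c = (c, c • pack (Bfam' F v2 j V)) := by
      intro V c
      show c • ((1 : L), pack (Bfam' F v2 j V)) = _
      rw [Prod.smul_mk, smul_eq_mul, mul_one]
    have hφinj : ∀ V, Injective (φ V) := by
      intro V a b hab
      rw [hφapp, hφapp] at hab
      exact congrArg Prod.fst hab
    refine ⟨fun V => Submodule.map f (LinearMap.range (φ V)), fun V hV => ⟨?_, ?_⟩, ?_⟩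
    · intro x hx
      obtain ⟨y, _, rfl⟩ := hx
      simp only [f, LinearMap.coe_comp, Function.comp_apply]
      exact (Θ y).2
    · rw [finrank_map_inj' f hfinj, LinearMap.finrank_range_of_inj (hφinj V), hLrank]
    · intro V V' hV hV' hne
      rw [eq_bot_iff]
      intro z hz
      rw [Submodule.mem_inf] at hz
      obtain ⟨hz1, hz2⟩ := hz
      rw [Submodule.mem_map] at hz1 hz2
      obtain ⟨u, hu, rfl⟩ := hz1
      obtain ⟨u', hu', hzu'⟩ := hz2
      have huu' : u = u' := hfinj hzu'.symm
      subst huu'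
      obtain ⟨c, rfl⟩ := LinearMap.mem_range.mp hu
      obtain ⟨c', hc'⟩ := LinearMap.mem_range.mp hu'
      rw [hφapp] at hc'
      rw [hφapp] at hc' ⊢
      have hcc : c' = c := congrArg Prod.fst hc'
      subst hcc
      rcases eq_or_ne c' 0 with rfl | hc0
      · simp [Submodule.mem_bot, Prod.mk_zero_zero]
      exfalso
      apply hne
      have hp2 : c' • pack (Bfam' F v2 j V') = c' • pack (Bfam' F v2 j V) :=
        congrArg Prod.snd hc'
      have hpeq : pack (Bfam' F v2 j V') = pack (Bfam' F v2 j V) :=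
        smul_right_injective _ hc0 hp2
      have hBeq : Bfam' F v2 j V' = Bfam' F v2 j V := hpack hpeq
      rw [← Bfam'_span F v2 j V hV, ← Bfam'_span F v2 j V' hV', hBeq]

lemma upper_half' (F : Type) [Field F] (v1 v2 k d : ℕ)
    (hdeven : 2 ∣ d) (hd2 : 2 ≤ d) (hdk : d ≤ 2 * k) (hkd : k < d)
    (C : Finset (Submodule F (Fin v1 → F))) (W : Submodule F (Fin v1 → F))
    (hC : IsCDCode F v1 k d C) (hW : finrank F ↥W = v2)
    (hint : ∀ U ∈ C, d / 2 ≤ finrank F ↥(U ⊓ W)) :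
    ∃ C' : Finset (Submodule F (Fin v2 → F)), C'.card = C.card ∧
      IsCDCode F v2 (d / 2) (2 * d - 2 * k) C' := by
  classical
  have hWr : finrank F ↥W = finrank F (Fin v2 → F) := by
    rw [hW]; simp [Module.finrank_pi]
  obtain ⟨g⟩ := FiniteDimensional.nonempty_linearEquiv_of_finrank_eq hWr
  -- choose X U ≤ U ⊓ W of finrank d/2
  have hX : ∀ U : Submodule F (Fin v1 → F), U ∈ C →
      ∃ X : Submodule F (Fin v1 → F), X ≤ U ⊓ W ∧ finrank F X = d / 2 := fun U hU =>
    exists_le_finrank_eq' (U ⊓ W) (d / 2) (hint U hU)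
  let X : Submodule F (Fin v1 → F) → Submodule F (Fin v1 → F) := fun U =>
    if h : U ∈ C then (hX U h).choose else ⊥
  have hXle : ∀ U ∈ C, X U ≤ U ⊓ W := fun U hU => by
    simp only [X, dif_pos hU]; exact (hX U hU).choose_spec.1
  have hXrank : ∀ U ∈ C, finrank F ↥(X U) = d / 2 := fun U hU => by
    have h : X U = (hX U hU).choose := dif_pos hU
    rw [h]; exact (hX U hU).choose_spec.2
  let Y : Submodule F (Fin v1 → F) → Submodule F (Fin v2 → F) := fun U =>
    map (g : ↥W →ₗ[F] (Fin v2 → F)) (comap W.subtype (X U))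
  -- finrank of Y
  have hYrank : ∀ U ∈ C, finrank F ↥(Y U) = d / 2 := by
    intro U hU
    have h1 : finrank F ↥(Y U) = finrank F ↥(comap W.subtype (X U)) :=
      LinearEquiv.finrank_map_eq g _
    have h2 : finrank F ↥(comap W.subtype (X U)) = finrank F ↥(X U) :=
      LinearEquiv.finrank_eq (Submodule.comapSubtypeEquivOfLe ((hXle U hU).trans inf_le_right))
    rw [h1, h2, hXrank U hU]
  -- inf of Y
  have hYinf : ∀ U ∈ C, ∀ U' ∈ C, finrank F ↥(Y U ⊓ Y U') = finrank F ↥(X U ⊓ X U') := by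
    intro U hU U' hU'
    have h0 : Y U ⊓ Y U' = map (g : ↥W →ₗ[F] (Fin v2 → F))
        (comap W.subtype (X U) ⊓ comap W.subtype (X U')) := by
      simp only [Y]
      exact (Submodule.map_inf (g : ↥W →ₗ[F] (Fin v2 → F)) g.injective).symm
    rw [h0, ← Submodule.comap_inf, LinearEquiv.finrank_map_eq g]
    exact LinearEquiv.finrank_eq (Submodule.comapSubtypeEquivOfLe
      (le_trans (le_trans inf_le_left (hXle U hU)) inf_le_right))
  have hXXle : ∀ U ∈ C, ∀ U' ∈ C, U ≠ U' → finrank F ↥(X U ⊓ X U') ≤ k - d / 2 := by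
    intro U hU U' hU' hne
    have h1 : finrank F ↥(X U ⊓ X U') ≤ finrank F ↥(U ⊓ U') :=
      Submodule.finrank_mono (inf_le_inf ((hXle U hU).trans inf_le_left)
        ((hXle U' hU').trans inf_le_left))
    have h2 := hC.2 U hU U' hU' hne
    rw [subspaceDist_formula' F _ _ _, hC.1 U hU, hC.1 U' hU'] at h2
    have h3 : finrank F ↥(U ⊓ U') ≤ finrank F ↥U := Submodule.finrank_mono inf_le_left
    rw [hC.1 U hU] at h3
    omega
  -- injectivity
  have hYinj : ∀ U ∈ C, ∀ U' ∈ C, Y U = Y U' → U = U' := by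
    intro U hU U' hU' h
    by_contra hne
    have h1 : finrank F ↥(Y U ⊓ Y U') = d / 2 := by rw [h, inf_idem]; exact hYrank U' hU'
    have := hXXle U hU U' hU' hne
    rw [hYinf U hU U' hU'] at h1
    omega
  refine ⟨C.image Y, Finset.card_image_of_injOn (fun U hU U' hU' => hYinj U hU U' hU'), ?_, ?_⟩
  · intro y hy
    obtain ⟨U, hU, rfl⟩ := Finset.mem_image.mp hy
    exact hYrank U hU
  · intro y hy y' hy' hne
    obtain ⟨U, hU, rfl⟩ := Finset.mem_image.mp hy
    obtain ⟨U', hU', rfl⟩ := Finset.mem_image.mp hy'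
    have hUne : U ≠ U' := fun h => hne (h ▸ rfl)
    rw [subspaceDist_formula' F _ _ _, hYrank U hU, hYrank U' hU', hYinf U hU U' hU']
    have := hXXle U hU U' hU' hUne
    omega

lemma lower_half' (F : Type) [Field F] [Fintype F] (v1 v2 k d : ℕ)
    (hdeven : 2 ∣ d) (hd2 : 2 ≤ d) (hdk : d ≤ 2 * k) (hkd : k < d)
    (hv2l : d / 2 ≤ v2) (hbig : v2 * k ≤ v1)
    (D : Finset (Submodule F (Fin v2 → F)))
    (hD : IsCDCode F v2 (d / 2) (2 * d - 2 * k) D) :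
    ∃ (C : Finset (Submodule F (Fin v1 → F))) (W : Submodule F (Fin v1 → F)),
      C.card = D.card ∧ IsCDCode F v1 k d C ∧ finrank F ↥W = v2 ∧
      (∀ U ∈ C, d / 2 ≤ finrank F ↥(U ⊓ W)) := by
  classical
  set j := d / 2 with hj
  set e := k - j with he
  have hdj : 2 * j = d := by omega
  have hj1 : 1 ≤ j := by omega
  have hej : e < j := by omega
  have hkje : k = j + e := by omega
  have hk1 : 1 ≤ k := by omega
  have hv2v1 : v2 ≤ v1 := by
    have h1 : v2 * 1 ≤ v2 * k := Nat.mul_le_mul_left v2 hk1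
    omega
  have hdim : v2 * (j + e) ≤ v1 := by rw [← hkje]; exact hbig
  set ι := padlow' F v2 v1 with hι
  have hιinj := padlow'_injective F v2 v1 hv2v1
  set Wc := LinearMap.range ι with hWc
  set Cc := LinearMap.ker (rh' F v2 v1 hv2v1) with hCc
  have hWCbot : Wc ⊓ Cc = ⊥ := range_padlow'_inf_ker F v2 v1 hv2v1
  obtain ⟨E, hE1, hE2⟩ := exists_spread' F v1 v2 j e hj1 hv2l hej hdim Cc
    (finrank_ker_rh' F v2 v1 hv2v1)
  set Uh : Submodule F (Fin v2 → F) → Submodule F (Fin v1 → F) :=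
    fun V => Submodule.map ι V ⊔ E V with hUh
  have hmaple : ∀ V : Submodule F (Fin v2 → F), Submodule.map ι V ≤ Wc := by
    rintro V x ⟨y, _, rfl⟩; exact ⟨y, rfl⟩
  have hmaprank : ∀ V : Submodule F (Fin v2 → F), finrank F ↥(Submodule.map ι V) = finrank F ↥V :=
    fun V => finrank_map_inj' ι hιinj V
  -- key facts for V ∈ D
  have hVrank : ∀ V ∈ D, finrank F ↥V = j := hD.1
  have hinfW : ∀ V ∈ D, Uh V ⊓ Wc = Submodule.map ι V := by
    intro V hV
    have h1 : Uh V ⊓ Wc = (Submodule.map ι V ⊔ E V) ⊓ (Wc ⊔ (⊥ : Submodule F (Fin v1 → F))) := by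
      rw [sup_bot_eq]
    rw [h1, inf_sup_decomp' hWCbot (hmaple V) le_rfl ((hE1 V (hVrank V hV)).1) bot_le]
    rw [inf_eq_left.mpr (hmaple V)]
    simp
  have hUhrank : ∀ V ∈ D, finrank F ↥(Uh V) = k := by
    intro V hV
    have hb : Submodule.map ι V ⊓ E V = ⊥ := by
      rw [eq_bot_iff, ← hWCbot]
      exact inf_le_inf (hmaple V) (hE1 V (hVrank V hV)).1
    have h2 := Submodule.finrank_sup_add_finrank_inf_eq (Submodule.map ι V) (E V)
    rw [hb] at h2
    simp only [finrank_bot] at h2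
    have h3 := hmaprank V
    have h4 := (hE1 V (hVrank V hV)).2
    have h5 := hVrank V hV
    show finrank F ↥(Submodule.map ι V ⊔ E V) = k
    omega
  have hUhinf : ∀ V ∈ D, ∀ V' ∈ D, V ≠ V' →
      finrank F ↥(Uh V ⊓ Uh V') = finrank F ↥(V ⊓ V') := by
    intro V hV V' hV' hne
    have h1 : Uh V ⊓ Uh V' = (Submodule.map ι V ⊓ Submodule.map ι V') ⊔ (E V ⊓ E V') :=
      inf_sup_decomp' hWCbot (hmaple V) (hmaple V') (hE1 V (hVrank V hV)).1
        (hE1 V' (hVrank V' hV')).1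
    rw [h1, hE2 V V' (hVrank V hV) (hVrank V' hV') hne, sup_bot_eq,
      ← Submodule.map_inf ι hιinj]
    exact hmaprank _
  have hVVle : ∀ V ∈ D, ∀ V' ∈ D, V ≠ V' → finrank F ↥(V ⊓ V') ≤ e := by
    intro V hV V' hV' hne
    have h2 := hD.2 V hV V' hV' hne
    rw [subspaceDist_formula' F _ V V', hVrank V hV, hVrank V' hV'] at h2
    have h3 : finrank F ↥(V ⊓ V') ≤ finrank F ↥V := Submodule.finrank_mono inf_le_left
    rw [hVrank V hV] at h3
    omega
  have hUhinj : ∀ V ∈ D, ∀ V' ∈ D, Uh V = Uh V' → V = V' := by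
    intro V hV V' hV' hUU
    have h1 : Submodule.map ι V = Submodule.map ι V' := by
      rw [← hinfW V hV, ← hinfW V' hV', hUU]
    exact Submodule.map_injective_of_injective hιinj h1
  refine ⟨D.image Uh, Wc, Finset.card_image_of_injOn (fun V hV V' hV' => hUhinj V hV V' hV'),
    ⟨?_, ?_⟩, ?_, ?_⟩
  · intro U hU
    obtain ⟨V, hV, rfl⟩ := Finset.mem_image.mp hU
    exact hUhrank V hV
  · intro U hU U' hU' hne
    obtain ⟨V, hV, rfl⟩ := Finset.mem_image.mp hU
    obtain ⟨V', hV', rfl⟩ := Finset.mem_image.mp hU'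
    have hVne : V ≠ V' := fun h => hne (h ▸ rfl)
    rw [subspaceDist_formula' F _ (Uh V) (Uh V'), hUhrank V hV, hUhrank V' hV',
      hUhinf V hV V' hV' hVne]
    have := hVVle V hV V' hV' hVne
    omega
  · rw [hWc, finrank_range_padlow' F v2 v1 hv2v1]
  · intro U hU
    obtain ⟨V, hV, rfl⟩ := Finset.mem_image.mp hU
    rw [hinfW V hV, hmaprank V, hVrank V hV]

/-- Proposition 10 of the paper. For non-trivial parameters with `k < d`
and `v1 ≥ v2 * k` we have `B_q(v1,v2,d;k) = A_q(v2, 2d-2k; d/2)`. -/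
theorem stmt_5 (q : ℕ) (F : Type) [Field F] [Fintype F] (hq : Fintype.card F = q)
    (v1 v2 k d : ℕ) (hdeven : 2 ∣ d) (hd2 : 2 ≤ d) (hdk : d ≤ 2 * k)
    (hkv1 : k ≤ v1) (hv2l : d / 2 ≤ v2) (hv2u : v2 ≤ v1)
    (hkd : k < d) (hbig : v2 * k ≤ v1) :
    Bq F v1 v2 d k = Aq F v2 (2 * d - 2 * k) (d / 2) := by
  classical
  haveI : Fintype (Submodule F (Fin v1 → F)) := Fintype.ofFinite _
  haveI : Fintype (Submodule F (Fin v2 → F)) := Fintype.ofFinite _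
  set SB := {n | ∃ (C : Finset (Submodule F (Fin v1 → F))) (W : Submodule F (Fin v1 → F)),
    C.card = n ∧ IsCDCode F v1 k d C ∧ Module.finrank F ↥W = v2 ∧
    (∀ U ∈ C, d / 2 ≤ Module.finrank F ↥(U ⊓ W))} with hSB
  set SA := {n | ∃ C : Finset (Submodule F (Fin v2 → F)), C.card = n ∧
    IsCDCode F v2 (d / 2) (2 * d - 2 * k) C} with hSA
  have hBb : BddAbove SB := by
    refine ⟨Fintype.card (Submodule F (Fin v1 → F)), ?_⟩
    rintro n ⟨C, W, hcard, _⟩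
    exact hcard ▸ Finset.card_le_univ C
  have hAb : BddAbove SA := by
    refine ⟨Fintype.card (Submodule F (Fin v2 → F)), ?_⟩
    rintro n ⟨C, hcard, _⟩
    exact hcard ▸ Finset.card_le_univ C
  have hBne : SB.Nonempty := by
    obtain ⟨W, _, hWrank⟩ := exists_le_finrank_eq' (⊤ : Submodule F (Fin v1 → F)) v2 (by
      simpa [Module.finrank_pi] using hv2u)
    exact ⟨0, ∅, W, rfl, ⟨fun U h => absurd h (Finset.notMem_empty U),
      fun U h => absurd h (Finset.notMem_empty U)⟩, hWrank,
      fun U h => absurd h (Finset.notMem_empty U)⟩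
  have hAne : SA.Nonempty :=
    ⟨0, ∅, rfl, ⟨fun U h => absurd h (Finset.notMem_empty U),
      fun U h => absurd h (Finset.notMem_empty U)⟩⟩
  apply le_antisymm
  · -- Bq ≤ Aq
    have hmem : Bq F v1 v2 d k ∈ SB := Nat.sSup_mem hBne hBb
    obtain ⟨C, W, hcard, hC, hW, hint⟩ := hmem
    obtain ⟨C', hcard', hC'⟩ := upper_half' F v1 v2 k d hdeven hd2 hdk hkd C W hC hW hint
    exact le_csSup hAb ⟨C', hcard'.trans hcard, hC'⟩
  · -- Aq ≤ Bq
    have hmem : Aq F v2 (2 * d - 2 * k) (d / 2) ∈ SA := Nat.sSup_mem hAne hAb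
    obtain ⟨D, hcard, hD⟩ := hmem
    obtain ⟨C, W, hcard', hC, hW, hint⟩ := lower_half' F v1 v2 k d hdeven hd2 hdk hkd
      hv2l hbig D hD
    exact le_csSup hBb ⟨C, W, hcard'.trans hcard, hC, hW, hint⟩
end

section
/- For every prime power q, B_q(16, 5, 6; 5) ≥ q^6 + q^5 + 2q^4 + 2q^3 + 2q^2 + q + 1 (the Gaussian binomial coefficient [5 choose 2]_q). -/
set_option linter.unusedSectionVars false
set_option maxHeartbeats 1000000


namespace Stmt10Aux

open Module Submodule

variable {F : Type} [Field F] [Fintype F]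

/-! ### A partial spread of 2-dimensional subspaces of `F^11`. -/

def s1 (v : Fin 8 → F) : Fin 11 → F := fun j => match j with
  | 0 => 1 | 1 => 0 | 2 => v 0 | 3 => v 1 | 4 => v 2 | 5 => v 3 | 6 => v 4
  | 7 => v 5 | 8 => v 6 | 9 => v 7 | 10 => 0

def s2 (v : Fin 8 → F) : Fin 11 → F := fun j => match j with
  | 0 => 0 | 1 => 1 | 2 => 0 | 3 => v 0 | 4 => v 1 | 5 => v 2 | 6 => v 3
  | 7 => v 4 | 8 => v 5 | 9 => v 6 | 10 => v 7

@[simp] lemma s1_0 (v : Fin 8 → F) : s1 v 0 = 1 := rfl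
@[simp] lemma s1_1 (v : Fin 8 → F) : s1 v 1 = 0 := rfl
@[simp] lemma s1_2 (v : Fin 8 → F) : s1 v 2 = v 0 := rfl
@[simp] lemma s1_3 (v : Fin 8 → F) : s1 v 3 = v 1 := rfl
@[simp] lemma s1_4 (v : Fin 8 → F) : s1 v 4 = v 2 := rfl
@[simp] lemma s1_5 (v : Fin 8 → F) : s1 v 5 = v 3 := rfl
@[simp] lemma s1_6 (v : Fin 8 → F) : s1 v 6 = v 4 := rfl
@[simp] lemma s1_7 (v : Fin 8 → F) : s1 v 7 = v 5 := rfl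
@[simp] lemma s1_8 (v : Fin 8 → F) : s1 v 8 = v 6 := rfl
@[simp] lemma s1_9 (v : Fin 8 → F) : s1 v 9 = v 7 := rfl
@[simp] lemma s1_10 (v : Fin 8 → F) : s1 v 10 = 0 := rfl
@[simp] lemma s2_0 (v : Fin 8 → F) : s2 v 0 = 0 := rfl
@[simp] lemma s2_1 (v : Fin 8 → F) : s2 v 1 = 1 := rfl
@[simp] lemma s2_2 (v : Fin 8 → F) : s2 v 2 = 0 := rfl
@[simp] lemma s2_3 (v : Fin 8 → F) : s2 v 3 = v 0 := rfl
@[simp] lemma s2_4 (v : Fin 8 → F) : s2 v 4 = v 1 := rfl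
@[simp] lemma s2_5 (v : Fin 8 → F) : s2 v 5 = v 2 := rfl
@[simp] lemma s2_6 (v : Fin 8 → F) : s2 v 6 = v 3 := rfl
@[simp] lemma s2_7 (v : Fin 8 → F) : s2 v 7 = v 4 := rfl
@[simp] lemma s2_8 (v : Fin 8 → F) : s2 v 8 = v 5 := rfl
@[simp] lemma s2_9 (v : Fin 8 → F) : s2 v 9 = v 6 := rfl
@[simp] lemma s2_10 (v : Fin 8 → F) : s2 v 10 = v 7 := rfl

/-- The 2-dimensional subspace of `F^11` attached to `v : F^8`. -/
def Sv (v : Fin 8 → F) : Submodule F (Fin 11 → F) := Submodule.span F {s1 v, s2 v}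

lemma sv_li (v : Fin 8 → F) : LinearIndependent F ![s1 v, s2 v] := by
  rw [LinearIndependent.pair_iff]
  intro s t hst
  constructor
  · simpa using congrFun hst 0
  · simpa using congrFun hst 1

lemma pair_eq_range (v : Fin 8 → F) :
    ({s1 v, s2 v} : Set (Fin 11 → F)) = Set.range ![s1 v, s2 v] := by
  ext x
  simp [Fin.exists_fin_two, eq_comm, or_comm]

lemma Sv_finrank (v : Fin 8 → F) : finrank F ↥(Sv v) = 2 := by
  have h := finrank_span_eq_card (sv_li v)
  rw [Sv, pair_eq_range v]
  simpa using h

lemma Sv_disjoint {v w : Fin 8 → F} (hvw : v ≠ w) : Sv v ⊓ Sv w = ⊥ := by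
  rw [eq_bot_iff]
  intro x hx
  rw [Submodule.mem_inf] at hx
  obtain ⟨a, b, hab⟩ := Submodule.mem_span_pair.mp hx.1
  obtain ⟨c, d, hcd⟩ := Submodule.mem_span_pair.mp hx.2
  have h : a • s1 v + b • s2 v = c • s1 w + d • s2 w := by rw [hab, hcd]
  have h0 : a = c := by simpa using congrFun h 0
  have h1 : b = d := by simpa using congrFun h 1
  subst h0; subst h1
  have e2 : a * v 0 = a * w 0 := by simpa using congrFun h 2
  have e3 : a * v 1 + b * v 0 = a * w 1 + b * w 0 := by simpa using congrFun h 3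
  have e4 : a * v 2 + b * v 1 = a * w 2 + b * w 1 := by simpa using congrFun h 4
  have e5 : a * v 3 + b * v 2 = a * w 3 + b * w 2 := by simpa using congrFun h 5
  have e6 : a * v 4 + b * v 3 = a * w 4 + b * w 3 := by simpa using congrFun h 6
  have e7 : a * v 5 + b * v 4 = a * w 5 + b * w 4 := by simpa using congrFun h 7
  have e8 : a * v 6 + b * v 5 = a * w 6 + b * w 5 := by simpa using congrFun h 8
  have e9 : a * v 7 + b * v 6 = a * w 7 + b * w 6 := by simpa using congrFun h 9
  have e10 : b * v 7 = b * w 7 := by simpa using congrFun h 10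
  have hab0 : a = 0 ∧ b = 0 := by
    by_cases ha : a = 0
    · subst ha
      refine ⟨rfl, ?_⟩
      by_cases hb : b = 0
      · exact hb
      · exfalso
        apply hvw
        simp only [zero_mul, zero_add] at e3 e4 e5 e6 e7 e8 e9
        funext k
        match k with
        | 0 => exact mul_left_cancel₀ hb e3
        | 1 => exact mul_left_cancel₀ hb e4
        | 2 => exact mul_left_cancel₀ hb e5
        | 3 => exact mul_left_cancel₀ hb e6
        | 4 => exact mul_left_cancel₀ hb e7
        | 5 => exact mul_left_cancel₀ hb e8
        | 6 => exact mul_left_cancel₀ hb e9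
        | 7 => exact mul_left_cancel₀ hb e10
    · exfalso
      apply hvw
      have u0 : v 0 = w 0 := mul_left_cancel₀ ha e2
      have u1 : v 1 = w 1 := by
        rw [u0] at e3; exact mul_left_cancel₀ ha (add_right_cancel e3)
      have u2 : v 2 = w 2 := by
        rw [u1] at e4; exact mul_left_cancel₀ ha (add_right_cancel e4)
      have u3 : v 3 = w 3 := by
        rw [u2] at e5; exact mul_left_cancel₀ ha (add_right_cancel e5)
      have u4 : v 4 = w 4 := by
        rw [u3] at e6; exact mul_left_cancel₀ ha (add_right_cancel e6)
      have u5 : v 5 = w 5 := by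
        rw [u4] at e7; exact mul_left_cancel₀ ha (add_right_cancel e7)
      have u6 : v 6 = w 6 := by
        rw [u5] at e8; exact mul_left_cancel₀ ha (add_right_cancel e8)
      have u7 : v 7 = w 7 := by
        rw [u6] at e9; exact mul_left_cancel₀ ha (add_right_cancel e9)
      funext k
      match k with
      | 0 => exact u0
      | 1 => exact u1
      | 2 => exact u2
      | 3 => exact u3
      | 4 => exact u4
      | 5 => exact u5
      | 6 => exact u6
      | 7 => exact u7
  obtain ⟨ha0, hb0⟩ := hab0
  subst ha0; subst hb0
  simp only [zero_smul, add_zero] at hab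
  exact Submodule.mem_bot F |>.mpr hab.symm

/-! ### Products of submodules -/

section Prod

variable {M N : Type*} [AddCommGroup M] [AddCommGroup N] [Module F M] [Module F N]

lemma prod_inf_prod' (p p' : Submodule F M) (q q' : Submodule F N) :
    p.prod q ⊓ p'.prod q' = (p ⊓ p').prod (q ⊓ q') := by
  ext x
  simp only [Submodule.mem_inf, Submodule.mem_prod]
  tauto

/-- A product of submodules is isomorphic to the product of the two submodules. -/
def prodSubEquiv (p : Submodule F M) (q : Submodule F N) :
    ↥(p.prod q) ≃ₗ[F] ↥p × ↥q where
  toFun z := (⟨z.1.1, (Submodule.mem_prod.mp z.2).1⟩, ⟨z.1.2, (Submodule.mem_prod.mp z.2).2⟩)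
  invFun w := ⟨(w.1.1, w.2.1), Submodule.mem_prod.mpr ⟨w.1.2, w.2.2⟩⟩
  map_add' x y := rfl
  map_smul' c x := rfl
  left_inv z := rfl
  right_inv w := rfl

lemma finrank_prodSub [FiniteDimensional F M] [FiniteDimensional F N]
    (p : Submodule F M) (q : Submodule F N) :
    finrank F ↥(p.prod q) = finrank F ↥p + finrank F ↥q := by
  rw [(prodSubEquiv p q).finrank_eq, Module.finrank_prod]

end Prod

/-! ### Counting the Grassmannian of 3-spaces of `F^5` -/

instance {M : Type*} [AddCommGroup M] [Module F M] [Finite M] :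
    Finite (Submodule F M) :=
  Finite.of_injective (fun T => (T : Set M)) SetLike.coe_injective

/-- The Grassmannian of 3-dimensional subspaces of `F^5`. -/
def Gr3 (F : Type) [Field F] := {T : Submodule F (Fin 5 → F) // finrank F ↥T = 3}

instance : Finite (Gr3 F) := by unfold Gr3; infer_instance

/-- Flatten a pair (3-space, independent triple inside it) to an independent triple. -/
def flatten (z : Σ T : Gr3 F, {s : Fin 3 → ↥T.1 // LinearIndependent F s}) :
    {s : Fin 3 → (Fin 5 → F) // LinearIndependent F s} :=
  ⟨(z.1.1.subtype) ∘ z.2.1, z.2.2.map' _ (Submodule.ker_subtype _)⟩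

lemma span_flatten (z : Σ T : Gr3 F, {s : Fin 3 → ↥T.1 // LinearIndependent F s}) :
    Submodule.span F (Set.range ((flatten z).1)) = z.1.1 := by
  have hle : Submodule.span F (Set.range ((flatten z).1)) ≤ z.1.1 := by
    rw [Submodule.span_le]
    rintro x ⟨i, rfl⟩
    exact (z.2.1 i).2
  have h1 : finrank F ↥(Submodule.span F (Set.range ((flatten z).1))) = 3 := by
    rw [finrank_span_eq_card (flatten z).2]
    simp
  exact Submodule.eq_of_le_of_finrank_le hle (by rw [h1, z.1.2])

lemma flatten_bijective : Function.Bijective (flatten (F := F)) := by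
  constructor
  · rintro ⟨⟨T, hT⟩, s, hs⟩ ⟨⟨T', hT'⟩, s', hs'⟩ h
    have hfun : (T.subtype) ∘ s = (T'.subtype) ∘ s' := congrArg Subtype.val h
    have hTT' : T = T' := by
      have h1 := span_flatten (F := F) ⟨⟨T, hT⟩, s, hs⟩
      have h2 := span_flatten (F := F) ⟨⟨T', hT'⟩, s', hs'⟩
      simp only [flatten] at h1 h2
      rw [← h1, ← h2, hfun]
    subst hTT'
    have hss : s = s' := by
      funext i
      exact Subtype.ext (congrFun hfun i)
    subst hss
    rfl
  · intro s
    refine ⟨⟨⟨Submodule.span F (Set.range s.1), ?_⟩,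
      fun i => ⟨s.1 i, Submodule.subset_span (Set.mem_range_self i)⟩, ?_⟩, ?_⟩
    · rw [finrank_span_eq_card s.2]; simp
    · exact LinearIndependent.of_comp (Submodule.span F (Set.range s.1)).subtype s.2
    · exact Subtype.ext rfl

lemma card_gr3 : Nat.card (Gr3 F) =
    Fintype.card F ^ 6 + Fintype.card F ^ 5 + 2 * Fintype.card F ^ 4 + 2 * Fintype.card F ^ 3 +
      2 * Fintype.card F ^ 2 + Fintype.card F + 1 := by
  classical
  set q := Fintype.card F with hqdef
  have hq2 : 2 ≤ q := Fintype.one_lt_card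
  have hbig : Nat.card {s : Fin 3 → (Fin 5 → F) // LinearIndependent F s} =
      (q ^ 5 - 1) * (q ^ 5 - q) * (q ^ 5 - q ^ 2) := by
    rw [card_linearIndependent (by simp [Module.finrank_fintype_fun_eq_card])]
    simp [Module.finrank_fintype_fun_eq_card, Fin.prod_univ_three, mul_assoc]
    rfl
  have hsmall : ∀ T : Gr3 F, Nat.card {s : Fin 3 → ↥T.1 // LinearIndependent F s} =
      (q ^ 3 - 1) * (q ^ 3 - q) * (q ^ 3 - q ^ 2) := by
    intro T
    rw [card_linearIndependent (le_of_eq T.2.symm)]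
    simp [T.2, Fin.prod_univ_three, mul_assoc]
    rfl
  letI : Fintype (Gr3 F) := Fintype.ofFinite _
  have e1 : Nat.card (Σ T : Gr3 F, {s : Fin 3 → ↥T.1 // LinearIndependent F s}) =
      Nat.card {s : Fin 3 → (Fin 5 → F) // LinearIndependent F s} :=
    Nat.card_eq_of_bijective _ flatten_bijective
  have e2 : Nat.card (Σ T : Gr3 F, {s : Fin 3 → ↥T.1 // LinearIndependent F s}) =
      Nat.card (Gr3 F) * ((q ^ 3 - 1) * (q ^ 3 - q) * (q ^ 3 - q ^ 2)) := by
    rw [Nat.card_eq_fintype_card, Fintype.card_sigma]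
    rw [Finset.sum_congr rfl (fun T _ => by
      rw [← Nat.card_eq_fintype_card, hsmall T])]
    rw [Finset.sum_const, Finset.card_univ, smul_eq_mul, Nat.card_eq_fintype_card]
  have key : Nat.card (Gr3 F) * ((q ^ 3 - 1) * (q ^ 3 - q) * (q ^ 3 - q ^ 2)) =
      (q ^ 5 - 1) * (q ^ 5 - q) * (q ^ 5 - q ^ 2) := by
    rw [← e2, e1, hbig]
  have b1 : 1 ≤ q ^ 3 := Nat.one_le_pow _ _ (by omega)
  have hmon : ∀ i j : ℕ, i ≤ j → q ^ i ≤ q ^ j := fun i j h =>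
    Nat.pow_le_pow_right (by omega) h
  have b2 : q ≤ q ^ 3 := by simpa using hmon 1 3 (by omega)
  have b3 : q ^ 2 ≤ q ^ 3 := hmon 2 3 (by omega)
  have b4 : 1 ≤ q ^ 5 := Nat.one_le_pow _ _ (by omega)
  have b5 : q ≤ q ^ 5 := by simpa using hmon 1 5 (by omega)
  have b6 : q ^ 2 ≤ q ^ 5 := hmon 2 5 (by omega)
  have hkey2 : (q ^ 6 + q ^ 5 + 2 * q ^ 4 + 2 * q ^ 3 + 2 * q ^ 2 + q + 1) *
      ((q ^ 3 - 1) * (q ^ 3 - q) * (q ^ 3 - q ^ 2)) =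
      (q ^ 5 - 1) * (q ^ 5 - q) * (q ^ 5 - q ^ 2) := by
    zify [b1, b2, b3, b4, b5, b6]
    ring
  have hpos : 0 < (q ^ 3 - 1) * (q ^ 3 - q) * (q ^ 3 - q ^ 2) := by
    have h1 : q ^ 2 < q ^ 3 := Nat.pow_lt_pow_right (by omega) (by omega)
    have h2 : q < q ^ 3 := by
      have := Nat.pow_lt_pow_right (show 1 < q by omega) (show 1 < 3 by omega)
      simpa using this
    have h3 : 1 < q ^ 3 := Nat.one_lt_pow (by omega) (by omega)
    exact Nat.mul_pos (Nat.mul_pos (by omega) (by omega)) (by omega)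
  exact Nat.eq_of_mul_eq_mul_right hpos (key.trans hkey2.symm)

/-! ### Assembly -/

theorem main (F : Type) [Field F] [Fintype F] :
    Fintype.card F ^ 6 + Fintype.card F ^ 5 + 2 * Fintype.card F ^ 4 +
      2 * Fintype.card F ^ 3 + 2 * Fintype.card F ^ 2 + Fintype.card F + 1 ≤ Bq F 16 5 6 5 := by
  classical
  set q := Fintype.card F with hqdef
  set N := q ^ 6 + q ^ 5 + 2 * q ^ 4 + 2 * q ^ 3 + 2 * q ^ 2 + q + 1 with hNdef
  have hq2 : 2 ≤ q := Fintype.one_lt_card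
  letI : Fintype (Gr3 F) := Fintype.ofFinite _
  have hcard : Fintype.card (Gr3 F) = N := by
    rw [← Nat.card_eq_fintype_card, card_gr3]
  -- an embedding of the Grassmannian into `F^8`
  have key : ∀ k : ℕ, 2 * q ^ k ≤ q ^ (k + 1) := fun k => by
    have h := Nat.mul_le_mul_right (q ^ k) hq2
    simpa [pow_succ, mul_comm] using h
  have hN8 : N ≤ q ^ 8 := by
    have k1 := key 1; have k2 := key 2; have k3 := key 3; have k4 := key 4
    have k5 := key 5; have k6 := key 6; have k7 := key 7
    norm_num at k1 k2 k3 k4 k5 k6 k7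
    rw [hNdef]
    linarith [k1, k2, k3, k4, k5, k6, k7, hq2]
  have h8 : Fintype.card (Fin 8 → F) = q ^ 8 := by
    simp [Fintype.card_fun]
    rfl
  obtain ⟨σ⟩ : Nonempty (Gr3 F ↪ (Fin 8 → F)) :=
    Function.Embedding.nonempty_of_card_le (by rw [hcard, h8]; exact hN8)
  -- the ambient linear equivalence
  have hEr : finrank F ((Fin 5 → F) × (Fin 11 → F)) = finrank F (Fin 16 → F) := by
    simp [Module.finrank_prod, Module.finrank_fintype_fun_eq_card]
  let E : ((Fin 5 → F) × (Fin 11 → F)) ≃ₗ[F] (Fin 16 → F) :=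
    LinearEquiv.ofFinrankEq _ _ hEr
  let EL : ((Fin 5 → F) × (Fin 11 → F)) →ₗ[F] (Fin 16 → F) := E
  have hELinj : Function.Injective EL := E.injective
  -- the code
  let f : Gr3 F → Submodule F (Fin 16 → F) :=
    fun T => Submodule.map EL (T.1.prod (Sv (σ T)))
  have hrank5 : ∀ T, finrank F ↥(f T) = 5 := by
    intro T
    show finrank F ↥(Submodule.map EL _) = 5
    rw [LinearEquiv.finrank_map_eq E, finrank_prodSub, T.2, Sv_finrank]
  have hinj : Function.Injective f := by
    intro T T' h
    have hmap : T.1.prod (Sv (σ T)) = T'.1.prod (Sv (σ T')) :=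
      Submodule.map_injective_of_injective hELinj h
    have hTT : T.1 = T'.1 := by
      ext x
      have := Submodule.ext_iff.mp hmap (x, 0)
      simpa [Submodule.mem_prod] using this
    exact Subtype.ext hTT
  let C : Finset (Submodule F (Fin 16 → F)) := Finset.univ.image f
  have hCcard : C.card = N := by
    rw [Finset.card_image_of_injective _ hinj, Finset.card_univ, hcard]
  let W : Submodule F (Fin 16 → F) :=
    Submodule.map EL ((⊤ : Submodule F (Fin 5 → F)).prod ⊥)
  have hW : finrank F ↥W = 5 := by
    show finrank F ↥(Submodule.map EL _) = 5
    rw [LinearEquiv.finrank_map_eq E, finrank_prodSub, finrank_top, finrank_bot,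
      Module.finrank_fintype_fun_eq_card]
    simp
  have hIW : ∀ T : Gr3 F, finrank F ↥(f T ⊓ W) = 3 := by
    intro T
    have : f T ⊓ W = Submodule.map EL ((T.1.prod (Sv (σ T))) ⊓ ((⊤ : Submodule F (Fin 5 → F)).prod ⊥)) :=
      (Submodule.map_inf EL hELinj).symm
    rw [this, prod_inf_prod', inf_top_eq, inf_bot_eq, LinearEquiv.finrank_map_eq E,
      finrank_prodSub, T.2, finrank_bot]
  have hdist : ∀ T T' : Gr3 F, T ≠ T' → 6 ≤ subspaceDist (f T) (f T') := by
    intro T T' hne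
    have hvne : σ T ≠ σ T' := fun h => hne (σ.injective h)
    have hTne : T.1 ≠ T'.1 := fun h => hne (Subtype.ext h)
    have hinf3 : finrank F ↥(T.1 ⊓ T'.1) ≤ 2 := by
      by_contra hgt
      push_neg at hgt
      have hle1 : finrank F ↥(T.1 ⊓ T'.1) ≤ finrank F ↥T.1 :=
        Submodule.finrank_mono inf_le_left
      have h1 : T.1 ⊓ T'.1 = T.1 :=
        Submodule.eq_of_le_of_finrank_le inf_le_left (by rw [T.2]; omega)
      have h2 : T.1 ⊓ T'.1 = T'.1 :=
        Submodule.eq_of_le_of_finrank_le inf_le_right (by rw [T'.2]; omega)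
      exact hTne (h1.symm.trans h2)
    have hinf : finrank F ↥(f T ⊓ f T') ≤ 2 := by
      have heq : f T ⊓ f T' = Submodule.map EL
          ((T.1.prod (Sv (σ T))) ⊓ (T'.1.prod (Sv (σ T')))) :=
        (Submodule.map_inf EL hELinj).symm
      rw [heq, prod_inf_prod', Sv_disjoint hvne, LinearEquiv.finrank_map_eq E,
        finrank_prodSub, finrank_bot, add_zero]
      exact hinf3
    have hsum := Submodule.finrank_sup_add_finrank_inf_eq (f T) (f T')
    rw [hrank5 T, hrank5 T'] at hsum
    simp only [subspaceDist]
    omega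
  -- conclude
  have hmem : N ∈ {n | ∃ (C : Finset (Submodule F (Fin 16 → F)))
      (W : Submodule F (Fin 16 → F)),
      C.card = n ∧ IsCDCode F 16 5 6 C ∧ finrank F ↥W = 5 ∧
      (∀ U ∈ C, 6 / 2 ≤ finrank F ↥(U ⊓ W))} := by
    refine ⟨C, W, hCcard, ⟨?_, ?_⟩, hW, ?_⟩
    · intro U hU
      obtain ⟨T, -, rfl⟩ := Finset.mem_image.mp hU
      exact hrank5 T
    · intro U hU U' hU' hne
      obtain ⟨T, -, rfl⟩ := Finset.mem_image.mp hU
      obtain ⟨T', -, rfl⟩ := Finset.mem_image.mp hU'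
      exact hdist T T' (fun h => hne (congrArg f h))
    · intro U hU
      obtain ⟨T, -, rfl⟩ := Finset.mem_image.mp hU
      rw [hIW T]
  letI : Fintype (Submodule F (Fin 16 → F)) := Fintype.ofFinite _
  have hbdd : BddAbove {n | ∃ (C : Finset (Submodule F (Fin 16 → F)))
      (W : Submodule F (Fin 16 → F)),
      C.card = n ∧ IsCDCode F 16 5 6 C ∧ finrank F ↥W = 5 ∧
      (∀ U ∈ C, 6 / 2 ≤ finrank F ↥(U ⊓ W))} := by
    refine ⟨Fintype.card (Submodule F (Fin 16 → F)), ?_⟩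
    rintro n ⟨C', W', hc, -⟩
    exact hc ▸ Finset.card_le_univ C'
  exact le_csSup hbdd hmem

end Stmt10Aux

/-- `B_q(16,5,6;5) ≥ q^6+q^5+2q^4+2q^3+2q^2+q+1 = [5 choose 2]_q`. -/
theorem stmt_10 (q : ℕ) (F : Type) [Field F] [Fintype F] (hq : Fintype.card F = q) :
    q ^ 6 + q ^ 5 + 2 * q ^ 4 + 2 * q ^ 3 + 2 * q ^ 2 + q + 1 ≤ Bq F 16 5 6 5 := by
  subst hq
  exact Stmt10Aux.main F
end

section
/- Let q be a prime power and let v, k, d, m be integers with d even, 2 ≤ d ≤ 2k, and k ≤ m ≤ v − k. Then A_q(v,d;k) ≥ A_q(m,d;k) · q^{(v−m)(k−d/2+1)} + A_q(v−m, d; k) (the linkage construction). -/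
set_option linter.unusedSectionVars false
set_option maxHeartbeats 1000000


open Polynomial

variable (F : Type) [Field F] [Fintype F] (n : ℕ)

/-- Degree-`n` extension of the finite field `F`. -/
noncomputable def ExtF : Type :=
  SplittingField (X ^ (Fintype.card F) ^ n - X : F[X])

noncomputable instance : Field (ExtF F n) :=
  inferInstanceAs (Field (SplittingField _))

noncomputable instance : Algebra F (ExtF F n) := inferInstanceAs (Algebra F (SplittingField _))

instance : IsSplittingField F (ExtF F n) (X ^ (Fintype.card F) ^ n - X) :=
  Polynomial.IsSplittingField.splittingField _

instance : FiniteDimensional F (ExtF F n) := by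
  exact IsSplittingField.finiteDimensional (ExtF F n) (X ^ (Fintype.card F) ^ n - X : F[X])

instance : Finite (ExtF F n) := Module.finite_of_finite F

theorem ExtF.finrank (h : n ≠ 0) : Module.finrank F (ExtF F n) = n := by
  haveI : Fintype (ExtF F n) := Fintype.ofFinite (ExtF F n)
  obtain ⟨p, hpc⟩ := CharP.exists F
  haveI : CharP F p := hpc
  obtain ⟨e, hp, hq⟩ := FiniteField.card F p
  haveI hfp : Fact p.Prime := ⟨hp⟩
  haveI : CharP (ExtF F n) p :=
    (Algebra.charP_iff F (ExtF F n) p).mp (by infer_instance)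
  have hq1 : 1 < Fintype.card F := Fintype.one_lt_card
  have aux : (X ^ Fintype.card F ^ n - X : F[X]) ≠ 0 := FiniteField.X_pow_card_pow_sub_X_ne_zero _ h hq1
  have hqn : Fintype.card F ^ n = p ^ (e * n) := by rw [hq, ← pow_mul]
  have hpdvd : p ∣ Fintype.card F ^ n := by
    rw [hqn]; exact dvd_pow_self p (by positivity)
  have key : Fintype.card ((X ^ Fintype.card F ^ n - X : F[X]).rootSet (ExtF F n)) = (X ^ Fintype.card F ^ n - X : F[X]).natDegree :=
    card_rootSet_eq_natDegree (galois_poly_separable p _ hpdvd)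
      (SplittingField.splits (X ^ Fintype.card F ^ n - X : F[X]))
  have nat_degree_eq : (X ^ Fintype.card F ^ n - X : F[X]).natDegree = Fintype.card F ^ n :=
    FiniteField.X_pow_card_pow_sub_X_natDegree_eq _ h hq1
  rw [nat_degree_eq] at key
  suffices (X ^ Fintype.card F ^ n - X : F[X]).rootSet (ExtF F n) = Set.univ by
    simp_rw [this, ← Fintype.ofEquiv_card (Equiv.Set.univ _)] at key
    rw [@Module.card_eq_pow_finrank F _ _ _ _ _ (_)] at key
    exact Nat.pow_right_injective hq1 key
  rw [Set.eq_univ_iff_forall]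
  suffices ∀ (x) (_ : x ∈ (⊤ : Subalgebra F (ExtF F n))),
      x ∈ (X ^ Fintype.card F ^ n - X : F[X]).rootSet (ExtF F n) by simpa
  rw [← IsSplittingField.adjoin_rootSet (ExtF F n) (X ^ (Fintype.card F) ^ n - X : F[X])]
  simp_rw [Algebra.mem_adjoin_iff]
  intro x hx
  refine Subring.closure_induction ?_ ?_ ?_ ?_ ?_ ?_ hx <;> simp_rw [mem_rootSet_of_ne aux]
  · rintro x (⟨r, rfl⟩ | hx)
    · simp only [map_sub, map_pow, aeval_X]
      rw [← map_pow, FiniteField.pow_card_pow, sub_self]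
    · rwa [mem_rootSet_of_ne aux] at hx
  · rw [← coeff_zero_eq_aeval_zero']
    simp only [coeff_X_pow, coeff_X_zero, sub_zero, _root_.map_eq_zero, ite_eq_right_iff,
      one_ne_zero, coeff_sub]
    intro hn
    exact Nat.not_lt_zero 1 (eq_zero_of_pow_eq_zero hn.symm ▸ hq1)
  · simp
  · simp only [aeval_X_pow, aeval_X, map_sub, hqn, add_pow_char_pow, sub_eq_zero]
    intro x y _ _ hx hy
    rw [hx, hy]
  · intro x _ hx
    simp only [sub_eq_zero, aeval_X_pow, aeval_X, map_sub, sub_neg_eq_add, hqn] at *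
    rw [neg_pow, hx, neg_one_pow_char_pow]
    simp
  · simp only [aeval_X_pow, aeval_X, map_sub, mul_pow, sub_eq_zero]
    intro x y _ _ hx hy
    rw [hx, hy]

theorem ExtF.card (h : n ≠ 0) : Nat.card (ExtF F n) = (Fintype.card F) ^ n := by
  let b := IsNoetherian.finsetBasis F (ExtF F n)
  haveI : Fintype (ExtF F n) := Fintype.ofFinite (ExtF F n)
  rw [Nat.card_eq_fintype_card, Module.card_fintype b, ← Module.finrank_eq_card_basis b,
    ExtF.finrank F n h]


open Polynomial

section LinFrob

variable {F : Type} [Field F] [Fintype F] {K : Type} [Field K] [Algebra F K] [Finite K]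

theorem pow_card_pow_add (x y : K) (i : ℕ) :
    (x + y) ^ (Fintype.card F) ^ i = x ^ (Fintype.card F) ^ i + y ^ (Fintype.card F) ^ i := by
  obtain ⟨p, hpc⟩ := CharP.exists F
  haveI : CharP F p := hpc
  obtain ⟨e, hp, hq⟩ := FiniteField.card F p
  haveI : Fact p.Prime := ⟨hp⟩
  haveI : CharP K p := (Algebra.charP_iff F K p).mp (by infer_instance)
  rw [hq, ← pow_mul, add_pow_char_pow]

/-- The `F`-linear "linearized polynomial" map `x ↦ ∑ i, a i * x ^ q ^ i` on `K`. -/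
noncomputable def linFrob (s : ℕ) (a : Fin s → K) : K →ₗ[F] K where
  toFun x := ∑ i, a i * x ^ (Fintype.card F) ^ (i : ℕ)
  map_add' x y := by
    rw [← Finset.sum_add_distrib]
    refine Finset.sum_congr rfl fun i _ => ?_
    rw [pow_card_pow_add (F := F), mul_add]
  map_smul' c x := by
    simp only [RingHom.id_apply, Finset.smul_sum]
    refine Finset.sum_congr rfl fun i _ => ?_
    rw [Algebra.smul_def, Algebra.smul_def, mul_pow, ← map_pow,
      FiniteField.pow_card_pow]
    ring

theorem linFrob_apply (s : ℕ) (a : Fin s → K) (x : K) :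
    linFrob (F := F) s a x = ∑ i, a i * x ^ (Fintype.card F) ^ (i : ℕ) := rfl

/-- The linearized polynomial as an actual polynomial. -/
noncomputable def linFrobPoly (q s : ℕ) (a : Fin s → K) : K[X] :=
  ∑ i, C (a i) * X ^ q ^ (i : ℕ)

theorem linFrobPoly_eval (q s : ℕ) (a : Fin s → K) (x : K) :
    (linFrobPoly q s a).eval x = ∑ i, a i * x ^ q ^ (i : ℕ) := by
  simp [linFrobPoly, eval_finset_sum]

theorem linFrobPoly_coeff (q s : ℕ) (hq : 1 < q) (a : Fin s → K) (i : Fin s) :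
    (linFrobPoly q s a).coeff (q ^ (i : ℕ)) = a i := by
  rw [linFrobPoly, finset_sum_coeff]
  rw [Finset.sum_eq_single i]
  · simp
  · intro j _ hji
    rw [coeff_C_mul, coeff_X_pow, if_neg, mul_zero]
    intro hcontra
    exact hji (Fin.ext ((Nat.pow_right_injective hq hcontra.symm)))
  · simp

theorem linFrobPoly_ne_zero (q s : ℕ) (hq : 1 < q) (a : Fin s → K) (ha : a ≠ 0) :
    linFrobPoly q s a ≠ 0 := by
  obtain ⟨i, hi⟩ := Function.ne_iff.mp ha
  intro h
  apply hi
  have := linFrobPoly_coeff q s hq a i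
  rw [h, coeff_zero] at this
  simpa using this.symm

theorem linFrobPoly_natDegree_le (q s : ℕ) (hq : 0 < q) (a : Fin (s + 1) → K) :
    (linFrobPoly q (s + 1) a).natDegree ≤ q ^ s := by
  apply Polynomial.natDegree_sum_le_of_forall_le
  intro i _
  apply le_trans (natDegree_C_mul_le _ _)
  apply le_trans (natDegree_X_pow_le _)
  exact Nat.pow_le_pow_right hq (Nat.lt_succ_iff.mp i.isLt)

/-- Key bound: the kernel of a nonzero linearized polynomial map with `s+1`
coefficients has `F`-dimension at most `s`. -/
theorem linFrob_ker_finrank_le (s : ℕ) (a : Fin (s + 1) → K) (ha : a ≠ 0) :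
    Module.finrank F ↥(LinearMap.ker (linFrob (F := F) (s + 1) a)) ≤ s := by
  classical
  haveI : Fintype K := Fintype.ofFinite K
  haveI : Fintype ↥(LinearMap.ker (linFrob (F := F) (s + 1) a)) := Fintype.ofFinite _
  set q := Fintype.card F with hqdef
  have hq1 : 1 < q := Fintype.one_lt_card
  set P := linFrobPoly (K := K) q (s + 1) a with hP
  have hPne : P ≠ 0 := linFrobPoly_ne_zero q (s + 1) hq1 a ha
  -- kernel is contained in the root set of P
  have hsub : (LinearMap.ker (linFrob (F := F) (s + 1) a) : Set K) ⊆ ↑P.roots.toFinset := by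
    intro x hx
    simp only [SetLike.mem_coe, LinearMap.mem_ker] at hx
    rw [Finset.mem_coe, Multiset.mem_toFinset, mem_roots hPne, IsRoot.def, hP,
      linFrobPoly_eval]
    exact hx
  have hcard : Nat.card ↥(LinearMap.ker (linFrob (F := F) (s + 1) a)) ≤ q ^ s := by
    calc Nat.card ↥(LinearMap.ker (linFrob (F := F) (s + 1) a))
        = Nat.card (LinearMap.ker (linFrob (F := F) (s + 1) a) : Set K) := rfl
      _ ≤ Nat.card (↑P.roots.toFinset : Set K) := Nat.card_mono (Set.toFinite _) hsub
      _ = P.roots.toFinset.card := by rw [Nat.card_coe_set_eq, Set.ncard_coe_finset]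
      _ ≤ Multiset.card P.roots := P.roots.toFinset_card_le
      _ ≤ P.natDegree := P.card_roots'
      _ ≤ q ^ s := linFrobPoly_natDegree_le q s (by omega) a
  have hker : Nat.card ↥(LinearMap.ker (linFrob (F := F) (s + 1) a))
      = q ^ Module.finrank F ↥(LinearMap.ker (linFrob (F := F) (s + 1) a)) := by
    rw [Nat.card_eq_fintype_card, Module.card_eq_pow_finrank (K := F)]
  rw [hker] at hcard
  exact (Nat.pow_le_pow_iff_right hq1).mp hcard

end LinFrob

section Helpers

variable {F : Type} [Field F]

theorem subspaceDist_comm {V : Type*} [AddCommGroup V] [Module F V] (U W : Submodule F V) :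
    subspaceDist U W = subspaceDist W U := by
  rw [subspaceDist, subspaceDist, sup_comm, inf_comm]

theorem finrank_map_of_injective {V W : Type*} [AddCommGroup V] [Module F V] [AddCommGroup W]
    [Module F W] (f : V →ₗ[F] W) (hf : Function.Injective f) (p : Submodule F V) :
    Module.finrank F ↥(p.map f) = Module.finrank F ↥p :=
  (Submodule.equivMapOfInjective f hf p).symm.finrank_eq

theorem subspaceDist_map {V W : Type*} [AddCommGroup V] [Module F V] [AddCommGroup W]
    [Module F W] (f : V →ₗ[F] W) (hf : Function.Injective f) (p q : Submodule F V) :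
    subspaceDist (p.map f) (q.map f) = subspaceDist p q := by
  rw [subspaceDist, subspaceDist, ← Submodule.map_sup, ← Submodule.map_inf f hf,
    finrank_map_of_injective f hf, finrank_map_of_injective f hf]

theorem le_subspaceDist {V : Type*} [AddCommGroup V] [Module F V] [FiniteDimensional F V]
    (X X' : Submodule F V) (k δ : ℕ) (hX : Module.finrank F ↥X = k)
    (hX' : Module.finrank F ↥X' = k) (h : Module.finrank F ↥(X ⊓ X') + δ ≤ k) :
    2 * δ ≤ subspaceDist X X' := by
  have hsum := Submodule.finrank_sup_add_finrank_inf_eq X X'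
  rw [hX, hX'] at hsum
  rw [subspaceDist]
  omega

theorem inf_add_le_of_subspaceDist {V : Type*} [AddCommGroup V] [Module F V]
    [FiniteDimensional F V] (X X' : Submodule F V) (k δ : ℕ) (hX : Module.finrank F ↥X = k)
    (hX' : Module.finrank F ↥X' = k) (hd : 2 * δ ≤ subspaceDist X X') :
    Module.finrank F ↥(X ⊓ X') + δ ≤ k := by
  have hsum := Submodule.finrank_sup_add_finrank_inf_eq X X'
  have hle : Module.finrank F ↥(X ⊓ X') ≤ Module.finrank F ↥X :=
    Submodule.finrank_mono inf_le_left
  rw [hX, hX'] at hsum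
  rw [subspaceDist] at hd
  omega

theorem exists_injective_linearMap (V₁ V₂ : Type*) [AddCommGroup V₁] [Module F V₁]
    [AddCommGroup V₂] [Module F V₂] [FiniteDimensional F V₁] [FiniteDimensional F V₂]
    (h : Module.finrank F V₁ ≤ Module.finrank F V₂) :
    ∃ g : V₁ →ₗ[F] V₂, Function.Injective g := by
  let b := Module.finBasis F V₁
  let B := Module.finBasis F V₂
  have hli : LinearIndependent F fun i : Fin (Module.finrank F V₁) => B (Fin.castLE h i) :=
    B.linearIndependent.comp _ (Fin.castLE_injective h)
  refine ⟨b.constr F fun i => B (Fin.castLE h i), ?_⟩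
  rw [← LinearMap.ker_eq_bot, LinearMap.ker_eq_bot']
  intro x hx
  rw [Module.Basis.constr_apply_fintype] at hx
  have h0 : ∀ i, b.equivFun x i = 0 := (Fintype.linearIndependent_iff.mp hli) _ hx
  have hx0 : b.equivFun x = 0 := funext h0
  exact (LinearEquiv.map_eq_zero_iff _).mp hx0

variable [Fintype F]

instance finite_submodule (v : ℕ) : Finite (Submodule F (Fin v → F)) :=
  Finite.of_injective (fun U : Submodule F (Fin v → F) => (U : Set (Fin v → F)))
    SetLike.coe_injective

theorem bddAbove_code_set (v d k : ℕ) :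
    BddAbove {n | ∃ C : Finset (Submodule F (Fin v → F)), C.card = n ∧ IsCDCode F v k d C} := by
  haveI : Fintype (Submodule F (Fin v → F)) := Fintype.ofFinite _
  refine ⟨Fintype.card (Submodule F (Fin v → F)), ?_⟩
  rintro n ⟨C, rfl, -⟩
  exact Finset.card_le_univ C

theorem le_Aq {v d k : ℕ} (C : Finset (Submodule F (Fin v → F))) (h : IsCDCode F v k d C) :
    C.card ≤ Aq F v d k :=
  le_csSup (bddAbove_code_set v d k) ⟨C, rfl, h⟩

theorem Aq_exists (v d k : ℕ) :
    ∃ C : Finset (Submodule F (Fin v → F)), C.card = Aq F v d k ∧ IsCDCode F v k d C := by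
  have hne : {n | ∃ C : Finset (Submodule F (Fin v → F)),
      C.card = n ∧ IsCDCode F v k d C}.Nonempty :=
    ⟨0, ∅, Finset.card_empty, ⟨fun U hU => absurd hU (Finset.notMem_empty U),
      fun U hU => absurd hU (Finset.notMem_empty U)⟩⟩
  exact Nat.sSup_mem hne (bddAbove_code_set v d k)

end Helpers

section Lift

variable {F : Type} [Field F] [Fintype F] {K : Type} [Field K] [Algebra F K] [Finite K]
  {m n : ℕ} (κ : K ≃ₗ[F] (Fin n → F))

/-- The lifting map `x ↦ (x, κ (f_a (g x)))` on a codeword `U`. -/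
noncomputable def liftMap {sp : ℕ} (U : Submodule F (Fin m → F)) (g : ↥U →ₗ[F] K)
    (a : Fin sp → K) : ↥U →ₗ[F] (Fin m → F) × (Fin n → F) :=
  LinearMap.prod U.subtype (κ.toLinearMap ∘ₗ linFrob (F := F) sp a ∘ₗ g)

/-- The lifted codeword. -/
noncomputable def liftX {sp : ℕ} (U : Submodule F (Fin m → F)) (g : ↥U →ₗ[F] K)
    (a : Fin sp → K) : Submodule F ((Fin m → F) × (Fin n → F)) :=
  LinearMap.range (liftMap κ U g a)

theorem liftMap_apply {sp : ℕ} (U : Submodule F (Fin m → F)) (g : ↥U →ₗ[F] K)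
    (a : Fin sp → K) (x : ↥U) :
    liftMap κ U g a x = (↑x, κ (linFrob (F := F) sp a (g x))) := rfl

theorem liftMap_inj {sp : ℕ} (U : Submodule F (Fin m → F)) (g : ↥U →ₗ[F] K)
    (a : Fin sp → K) : Function.Injective (liftMap κ U g a) := fun x y h =>
  Subtype.ext (congrArg Prod.fst h)

theorem liftX_finrank {sp : ℕ} (U : Submodule F (Fin m → F)) (g : ↥U →ₗ[F] K)
    (a : Fin sp → K) : Module.finrank F ↥(liftX κ U g a) = Module.finrank F ↥U :=
  LinearMap.finrank_range_of_inj (liftMap_inj κ U g a)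

theorem liftX_fst {sp : ℕ} (U : Submodule F (Fin m → F)) (g : ↥U →ₗ[F] K)
    (a : Fin sp → K) :
    Submodule.map (LinearMap.fst F (Fin m → F) (Fin n → F)) (liftX κ U g a) = U := by
  rw [liftX, liftMap, ← LinearMap.range_comp, LinearMap.fst_prod, Submodule.range_subtype]

theorem liftX_zero {sp : ℕ} (U : Submodule F (Fin m → F)) (g : ↥U →ₗ[F] K)
    (a : Fin sp → K) (z : (Fin m → F) × (Fin n → F)) (hz : z ∈ liftX κ U g a)
    (h1 : z.1 = 0) : z = 0 := by
  obtain ⟨x, rfl⟩ := hz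
  have hx0 : x = 0 := Subtype.ext (by simpa [liftMap_apply] using h1)
  rw [hx0, map_zero]

theorem liftX_inf_ne {sp : ℕ} (U U' : Submodule F (Fin m → F)) (g : ↥U →ₗ[F] K)
    (g' : ↥U' →ₗ[F] K) (a a' : Fin sp → K) :
    Module.finrank F ↥(liftX κ U g a ⊓ liftX κ U' g' a') ≤ Module.finrank F ↥(U ⊓ U') := by
  set ρ : ↥(liftX κ U g a ⊓ liftX κ U' g' a') →ₗ[F] (Fin m → F) :=
    (LinearMap.fst F (Fin m → F) (Fin n → F)) ∘ₗ (liftX κ U g a ⊓ liftX κ U' g' a').subtype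
    with hρ
  have hρinj : Function.Injective ρ := by
    rw [← LinearMap.ker_eq_bot, LinearMap.ker_eq_bot']
    intro z hz
    have h1 : (z : (Fin m → F) × (Fin n → F)).1 = 0 := hz
    have h0 : (z : (Fin m → F) × (Fin n → F)) = 0 :=
      liftX_zero κ U g a _ (Submodule.mem_inf.mp z.2).1 h1
    exact Subtype.ext h0
  have hρrange : LinearMap.range ρ ≤ U ⊓ U' := by
    rintro y ⟨z, rfl⟩
    have hz := Submodule.mem_inf.mp z.2
    rw [Submodule.mem_inf]
    constructor
    · have h1 : ρ z ∈ Submodule.map (LinearMap.fst F (Fin m → F) (Fin n → F))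
          (liftX κ U g a) := Submodule.mem_map_of_mem hz.1
      rwa [liftX_fst] at h1
    · have h1 : ρ z ∈ Submodule.map (LinearMap.fst F (Fin m → F) (Fin n → F))
          (liftX κ U' g' a') := Submodule.mem_map_of_mem hz.2
      rwa [liftX_fst] at h1
  calc Module.finrank F ↥(liftX κ U g a ⊓ liftX κ U' g' a')
      = Module.finrank F ↥(LinearMap.range ρ) := (LinearMap.finrank_range_of_inj hρinj).symm
    _ ≤ Module.finrank F ↥(U ⊓ U') := Submodule.finrank_mono hρrange

theorem linFrob_sub_apply {sp : ℕ} (a a' : Fin sp → K) (y : K) :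
    linFrob (F := F) sp a y - linFrob (F := F) sp a' y = linFrob (F := F) sp (a - a') y := by
  simp [linFrob_apply, sub_mul, Finset.sum_sub_distrib]

theorem liftX_inf_same {s : ℕ} (U : Submodule F (Fin m → F)) (g : ↥U →ₗ[F] K)
    (hg : Function.Injective g) (a a' : Fin (s + 1) → K) (haa : a ≠ a') :
    Module.finrank F ↥(liftX κ U g a ⊓ liftX κ U g a') ≤ s := by
  have hane : a - a' ≠ 0 := sub_ne_zero.mpr haa
  set L := linFrob (F := F) (s + 1) (a - a') with hL
  have hsub : liftX κ U g a ⊓ liftX κ U g a' ≤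
      Submodule.map (liftMap κ U g a) (LinearMap.ker (L ∘ₗ g)) := by
    intro z hz
    obtain ⟨hz1, hz2⟩ := Submodule.mem_inf.mp hz
    obtain ⟨x, rfl⟩ := hz1
    obtain ⟨x', hx'⟩ := hz2
    have h1 : (x' : Fin m → F) = (x : Fin m → F) := congrArg Prod.fst hx'
    have hxx : x' = x := Subtype.ext h1
    subst hxx
    have h2 : κ (linFrob (F := F) (s + 1) a' (g x')) = κ (linFrob (F := F) (s + 1) a (g x')) :=
      congrArg Prod.snd hx'
    have h3 := κ.injective h2
    refine Submodule.mem_map_of_mem ?_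
    rw [LinearMap.mem_ker, LinearMap.comp_apply, hL, ← linFrob_sub_apply, h3, sub_self]
  calc Module.finrank F ↥(liftX κ U g a ⊓ liftX κ U g a')
      ≤ Module.finrank F ↥(Submodule.map (liftMap κ U g a) (LinearMap.ker (L ∘ₗ g))) :=
        Submodule.finrank_mono hsub
    _ = Module.finrank F ↥(LinearMap.ker (L ∘ₗ g)) :=
        finrank_map_of_injective _ (liftMap_inj κ U g a) _
    _ = Module.finrank F ↥(Submodule.map g (LinearMap.ker (L ∘ₗ g))) :=
        (finrank_map_of_injective g hg _).symm
    _ ≤ Module.finrank F ↥(LinearMap.ker L) := by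
        apply Submodule.finrank_mono
        rintro y ⟨x, hx, rfl⟩
        exact hx
    _ ≤ s := linFrob_ker_finrank_le s (a - a') hane

theorem liftX_same_inj {s : ℕ} (U : Submodule F (Fin m → F)) (g : ↥U →ₗ[F] K)
    (hg : Function.Injective g) (a a' : Fin (s + 1) → K)
    (hrank : s < Module.finrank F ↥U) (h : liftX κ U g a = liftX κ U g a') : a = a' := by
  by_contra haa
  have hane : a - a' ≠ 0 := sub_ne_zero.mpr haa
  have hrange : LinearMap.range g ≤ LinearMap.ker (linFrob (F := F) (s + 1) (a - a')) := by
    rintro y ⟨x, rfl⟩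
    have hmem : liftMap κ U g a x ∈ liftX κ U g a' := by
      rw [← h]; exact LinearMap.mem_range_self _ x
    obtain ⟨x', hx'⟩ := hmem
    have h1 : (x' : Fin m → F) = (x : Fin m → F) := congrArg Prod.fst hx'
    have hxx : x' = x := Subtype.ext h1
    subst hxx
    have h2 : κ (linFrob (F := F) (s + 1) a' (g x')) = κ (linFrob (F := F) (s + 1) a (g x')) :=
      congrArg Prod.snd hx'
    have h3 := κ.injective h2
    rw [LinearMap.mem_ker, ← linFrob_sub_apply, h3, sub_self]
  have h1 : Module.finrank F ↥(LinearMap.range g) = Module.finrank F ↥U :=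
    LinearMap.finrank_range_of_inj hg
  have h2 := Submodule.finrank_mono hrange
  have h3 := linFrob_ker_finrank_le (F := F) s (a - a') hane
  omega

end Lift


theorem stmt_12 (q : ℕ) (F : Type) [Field F] [Fintype F] (hq : Fintype.card F = q)
    (v k d m : ℕ) (hdeven : 2 ∣ d) (hd2 : 2 ≤ d) (hdk : d ≤ 2 * k)
    (hkm : k ≤ m) (hmv : m + k ≤ v) :
    Aq F m d k * q ^ ((v - m) * (k - d / 2 + 1)) + Aq F (v - m) d k ≤ Aq F v d k := by
  classical
  set δ := d / 2 with hδdef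
  have hd2δ : d = 2 * δ := by omega
  have hδ1 : 1 ≤ δ := by omega
  have hδk : δ ≤ k := by omega
  have hk1 : 1 ≤ k := by omega
  set n := v - m with hndef
  have hv : m + n = v := by omega
  have hkn : k ≤ n := by omega
  have hn0 : n ≠ 0 := by omega
  set s := k - δ with hsdef
  obtain ⟨C1, hC1card, hC1⟩ := Aq_exists (F := F) m d k
  obtain ⟨C2, hC2card, hC2⟩ := Aq_exists (F := F) n d k
  set K := ExtF F n with hKdef
  have hKfr : Module.finrank F K = n := ExtF.finrank F n hn0
  haveI : Fintype K := Fintype.ofFinite K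
  have hKcard : Fintype.card K = q ^ n := by
    have h := ExtF.card F n hn0
    rwa [Nat.card_eq_fintype_card, hq] at h
  obtain ⟨κ⟩ : Nonempty (K ≃ₗ[F] (Fin n → F)) := by
    apply FiniteDimensional.nonempty_linearEquiv_of_finrank_eq
    rw [hKfr, Module.finrank_fin_fun]
  have hgex : ∀ U : {x // x ∈ C1}, ∃ g : ↥(U : Submodule F (Fin m → F)) →ₗ[F] K,
      Function.Injective g := by
    intro U
    apply exists_injective_linearMap
    rw [hC1.1 U U.2, hKfr]; exact hkn
  choose g hg using hgex
  -- the family of codewords, indexed by a sum type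
  set Φ : ({x // x ∈ C1} × (Fin (s + 1) → K)) ⊕ {x // x ∈ C2} →
      Submodule F ((Fin m → F) × (Fin n → F)) := fun i =>
    Sum.elim (fun Ua : {x // x ∈ C1} × (Fin (s + 1) → K) =>
        liftX κ (Ua.1 : Submodule F (Fin m → F)) (g Ua.1) Ua.2)
      (fun W : {x // x ∈ C2} =>
        Submodule.map (LinearMap.inr F (Fin m → F) (Fin n → F))
          (W : Submodule F (Fin n → F))) i with hΦdef
  have hinr_inj : Function.Injective (LinearMap.inr F (Fin m → F) (Fin n → F)) :=
    LinearMap.inr_injective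
  have hΦfr : ∀ i, Module.finrank F ↥(Φ i) = k := by
    rintro (⟨U, a⟩ | W)
    · rw [hΦdef]
      simp only [Sum.elim_inl]
      exact (liftX_finrank κ _ _ _).trans (hC1.1 U U.2)
    · rw [hΦdef]
      simp only [Sum.elim_inr]
      exact (finrank_map_of_injective _ hinr_inj _).trans (hC2.1 W W.2)
  have hXY : ∀ (U : {x // x ∈ C1}) (a : Fin (s + 1) → K) (W : {x // x ∈ C2}),
      liftX κ (U : Submodule F (Fin m → F)) (g U) a ⊓
        Submodule.map (LinearMap.inr F (Fin m → F) (Fin n → F))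
          (W : Submodule F (Fin n → F)) = ⊥ := by
    intro U a W
    rw [eq_bot_iff]
    intro z hz
    obtain ⟨hz1, hz2⟩ := Submodule.mem_inf.mp hz
    obtain ⟨w, hw, rfl⟩ := Submodule.mem_map.mp hz2
    have h1 : (LinearMap.inr F (Fin m → F) (Fin n → F) w).1 = 0 := rfl
    have h0 := liftX_zero κ _ (g U) a _ hz1 h1
    rw [Submodule.mem_bot]
    exact h0
  have hXYne : ∀ (U : {x // x ∈ C1}) (a : Fin (s + 1) → K) (W : {x // x ∈ C2}),
      liftX κ (U : Submodule F (Fin m → F)) (g U) a ≠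
        Submodule.map (LinearMap.inr F (Fin m → F) (Fin n → F))
          (W : Submodule F (Fin n → F)) := by
    intro U a W h
    have h1 := liftX_fst κ (U : Submodule F (Fin m → F)) (g U) a
    rw [h, ← Submodule.map_comp, LinearMap.fst_comp_inr, Submodule.map_zero] at h1
    have hU := hC1.1 U U.2
    rw [← h1, finrank_bot] at hU
    omega
  have hΦinj : Function.Injective Φ := by
    rintro (⟨U, a⟩ | W) (⟨U', a'⟩ | W') h
    · rw [hΦdef] at h
      simp only [Sum.elim_inl] at h
      have hUU : U = U' := by
        apply Subtype.ext
        rw [← liftX_fst κ (U : Submodule F (Fin m → F)) (g U) a, h, liftX_fst]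
      subst hUU
      have haa : a = a' := liftX_same_inj κ _ (g U) (hg U) a a'
        (by rw [hC1.1 U U.2]; omega) h
      rw [haa]
    · rw [hΦdef] at h
      simp only [Sum.elim_inl, Sum.elim_inr] at h
      exact absurd h (hXYne U a W')
    · rw [hΦdef] at h
      simp only [Sum.elim_inl, Sum.elim_inr] at h
      exact absurd h.symm (hXYne U' a' W)
    · rw [hΦdef] at h
      simp only [Sum.elim_inr] at h
      exact congrArg Sum.inr (Subtype.ext (Submodule.map_injective_of_injective hinr_inj h))
  have hΦdist : ∀ i j, i ≠ j → d ≤ subspaceDist (Φ i) (Φ j) := by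
    have hXside : ∀ (U U' : {x // x ∈ C1}) (a a' : Fin (s + 1) → K),
        (⟨U, a⟩ : {x // x ∈ C1} × (Fin (s + 1) → K)) ≠ ⟨U', a'⟩ →
        d ≤ subspaceDist (liftX κ (U : Submodule F (Fin m → F)) (g U) a)
          (liftX κ (U' : Submodule F (Fin m → F)) (g U') a') := by
      intro U U' a a' hne
      have hXfr : ∀ (U : {x // x ∈ C1}) (a : Fin (s + 1) → K),
          Module.finrank F ↥(liftX κ (U : Submodule F (Fin m → F)) (g U) a) = k := by
        intro U a; rw [liftX_finrank, hC1.1 U U.2]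
      by_cases hUU : U = U'
      · subst hUU
        have haa : a ≠ a' := by
          intro h2; exact hne (by rw [h2])
        rw [hd2δ]
        apply le_subspaceDist _ _ k δ (hXfr U a) (hXfr U a')
        have h2 := liftX_inf_same κ _ (g U) (hg U) a a' haa
        omega
      · have hUUval : (U : Submodule F (Fin m → F)) ≠ (U' : Submodule F (Fin m → F)) :=
          fun h2 => hUU (Subtype.ext h2)
        rw [hd2δ]
        apply le_subspaceDist _ _ k δ (hXfr U a) (hXfr U' a')
        have h1 := liftX_inf_ne κ (U : Submodule F (Fin m → F)) U' (g U) (g U') a a'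
        have h2 : Module.finrank F
            ↥((U : Submodule F (Fin m → F)) ⊓ (U' : Submodule F (Fin m → F))) + δ ≤ k :=
          inf_add_le_of_subspaceDist _ _ k δ (hC1.1 U U.2) (hC1.1 U' U'.2)
            (by rw [← hd2δ]; exact hC1.2 U U.2 U' U'.2 hUUval)
        omega
    have hmixed : ∀ (U : {x // x ∈ C1}) (a : Fin (s + 1) → K) (W : {x // x ∈ C2}),
        d ≤ subspaceDist (liftX κ (U : Submodule F (Fin m → F)) (g U) a)
          (Submodule.map (LinearMap.inr F (Fin m → F) (Fin n → F))
            (W : Submodule F (Fin n → F))) := by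
      intro U a W
      refine le_trans hdk ?_
      apply le_subspaceDist _ _ k k
      · rw [liftX_finrank, hC1.1 U U.2]
      · rw [finrank_map_of_injective _ hinr_inj, hC2.1 W W.2]
      · rw [hXY U a W, finrank_bot]
        omega
    rintro (⟨U, a⟩ | W) (⟨U', a'⟩ | W') hij
    · rw [hΦdef]
      simp only [Sum.elim_inl]
      exact hXside U U' a a' (fun h2 => hij (congrArg Sum.inl h2))
    · rw [hΦdef]
      simp only [Sum.elim_inl, Sum.elim_inr]
      exact hmixed U a W'
    · rw [hΦdef]
      simp only [Sum.elim_inl, Sum.elim_inr]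
      rw [subspaceDist_comm]
      exact hmixed U' a' W
    · rw [hΦdef]
      simp only [Sum.elim_inr]
      rw [subspaceDist_map _ hinr_inj]
      apply hC2.2 W W.2 W' W'.2
      intro h2
      exact hij (congrArg Sum.inr (Subtype.ext h2))
  -- transport to `Fin v → F`
  let E : (Fin v → F) ≃ₗ[F] ((Fin m → F) × (Fin n → F)) :=
    (LinearEquiv.funCongrLeft F F (finCongr hv)).trans
      ((LinearEquiv.funCongrLeft F F finSumFinEquiv).trans
        (LinearEquiv.sumArrowLequivProdArrow (Fin m) (Fin n) F F))
  have heinj : Function.Injective (E.symm.toLinearMap :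
      ((Fin m → F) × (Fin n → F)) →ₗ[F] (Fin v → F)) := E.symm.injective
  set Cbig : Finset (Submodule F (Fin v → F)) :=
    Finset.image (fun i => Submodule.map E.symm.toLinearMap (Φ i)) Finset.univ with hCbigdef
  have hΨinj : Function.Injective (fun i => Submodule.map E.symm.toLinearMap (Φ i)) := by
    intro i j h
    exact hΦinj (Submodule.map_injective_of_injective heinj h)
  have hCbigcard : Cbig.card = C1.card * q ^ (n * (s + 1)) + C2.card := by
    rw [hCbigdef, Finset.card_image_of_injective _ hΨinj, Finset.card_univ,
      Fintype.card_sum, Fintype.card_prod, Fintype.card_fun, Fintype.card_coe,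
      Fintype.card_coe, hKcard, Fintype.card_fin, ← pow_mul]
  have hCbig : IsCDCode F v k d Cbig := by
    constructor
    · intro Z hZ
      rw [hCbigdef] at hZ
      obtain ⟨i, -, rfl⟩ := Finset.mem_image.mp hZ
      rw [finrank_map_of_injective _ heinj, hΦfr i]
    · intro Z hZ Z' hZ' hZZ
      rw [hCbigdef] at hZ hZ'
      obtain ⟨i, -, rfl⟩ := Finset.mem_image.mp hZ
      obtain ⟨j, -, rfl⟩ := Finset.mem_image.mp hZ'
      have hij : i ≠ j := fun h => hZZ (by rw [h])
      rw [subspaceDist_map _ heinj]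
      exact hΦdist i j hij
  have hfinal := le_Aq Cbig hCbig
  rw [hCbigcard, hC1card, hC2card] at hfinal
  exact hfinal
end

section
/- Let q be a prime power. For every odd integer v ≥ 3, A_q(v,4;2) ≥ 1 + q^3 + q^5 + ... + q^{v−2} (where the sum of odd powers q^3, q^5, ..., q^{v−2} is empty for v = 3). -/
open Polynomial Module
set_option synthInstance.maxHeartbeats 1000000
set_option maxHeartbeats 1000000
set_option linter.unusedSectionVars false

section Aux

variable (F : Type) [Field F] [Fintype F]

/-- The subfield of the algebraic closure fixed by `x ↦ x^(q^m)`, as a subalgebra. -/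
noncomputable def fixedAlg (m : ℕ) : Subalgebra F (AlgebraicClosure F) where
  carrier := {x | x ^ (Fintype.card F ^ m) = x}
  mul_mem' := by intro a b ha hb; simp only [Set.mem_setOf_eq] at *; rw [mul_pow, ha, hb]
  one_mem' := by simp
  add_mem' := by
    intro a b ha hb
    obtain ⟨p, hp⟩ := CharP.exists F
    obtain ⟨n, hprime, hcard⟩ := FiniteField.card F p
    haveI : Fact p.Prime := ⟨hprime⟩
    haveI : CharP (AlgebraicClosure F) p := charP_of_injective_algebraMap' F p
    simp only [Set.mem_setOf_eq] at *
    rw [hcard, ← pow_mul, add_pow_char_pow, pow_mul, ← hcard, ha, hb]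
  algebraMap_mem' := by
    intro r
    simp only [Set.mem_setOf_eq, ← map_pow, FiniteField.pow_card_pow]

lemma mem_fixedAlg_iff (m : ℕ) (x : AlgebraicClosure F) :
    x ∈ fixedAlg F m ↔ x ^ (Fintype.card F ^ m) = x := Iff.rfl

lemma fixedAlg_natDegree (m : ℕ) (hm : m ≠ 0) :
    (X ^ (Fintype.card F ^ m) - X : F[X]).natDegree = Fintype.card F ^ m :=
  FiniteField.X_pow_card_sub_X_natDegree_eq F (Nat.one_lt_pow hm Fintype.one_lt_card)

lemma fixedAlg_poly_ne (m : ℕ) (hm : m ≠ 0) :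
    (X ^ (Fintype.card F ^ m) - X : F[X]) ≠ 0 := by
  intro h
  have := fixedAlg_natDegree F m hm
  rw [h] at this
  simp only [natDegree_zero] at this
  have := Nat.one_lt_pow hm (Fintype.one_lt_card (α := F))
  omega

lemma fixedAlg_eq_rootSet (m : ℕ) (hm : m ≠ 0) :
    (fixedAlg F m : Set (AlgebraicClosure F)) =
      (X ^ (Fintype.card F ^ m) - X : F[X]).rootSet (AlgebraicClosure F) := by
  ext x
  rw [SetLike.mem_coe, mem_fixedAlg_iff, mem_rootSet_of_ne (fixedAlg_poly_ne F m hm)]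
  simp [sub_eq_zero]

noncomputable def fixedAlgFintype (m : ℕ) (hm : m ≠ 0) : Fintype (fixedAlg F m) := by
  have : (fixedAlg F m : Set (AlgebraicClosure F)).Finite := by
    rw [fixedAlg_eq_rootSet F m hm]
    exact Set.toFinite _
  exact this.fintype

lemma fixedAlg_card (m : ℕ) (hm : m ≠ 0) :
    letI := fixedAlgFintype F m hm
    Fintype.card (fixedAlg F m) = Fintype.card F ^ m := by
  letI := fixedAlgFintype F m hm
  obtain ⟨p, hp⟩ := CharP.exists F
  obtain ⟨n, hprime, hcard⟩ := FiniteField.card F p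
  haveI : Fact p.Prime := ⟨hprime⟩
  have hsep : (X ^ (Fintype.card F ^ m) - X : F[X]).Separable := by
    apply galois_poly_separable p
    rw [hcard, ← pow_mul]
    exact dvd_pow_self p (by positivity)
  have hsplits : Splits ((X ^ (Fintype.card F ^ m) - X : F[X]).map
      (algebraMap F (AlgebraicClosure F))) := IsAlgClosed.splits _
  have hcount := Polynomial.card_rootSet_eq_natDegree hsep hsplits
  rw [fixedAlg_natDegree F m hm] at hcount
  rw [← hcount]
  exact Fintype.card_congr (Equiv.setCongr (fixedAlg_eq_rootSet F m hm))

lemma fixedAlg_finrank (m : ℕ) (hm : m ≠ 0) :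
    Module.finrank F (fixedAlg F m) = m := by
  letI := fixedAlgFintype F m hm
  haveI : Module.Finite F (fixedAlg F m) := Module.Finite.of_finite
  have h := card_eq_pow_finrank (K := F) (V := fixedAlg F m)
  rw [fixedAlg_card F m hm] at h
  exact (Nat.pow_right_injective Fintype.one_lt_card h).symm

lemma fixedAlg_card' (m : ℕ) (hm : m ≠ 0) [inst : Fintype (fixedAlg F m)] :
    Fintype.card (fixedAlg F m) = Fintype.card F ^ m := by
  rw [Subsingleton.elim inst (fixedAlgFintype F m hm)]
  exact fixedAlg_card F m hm

lemma exists_alpha (Ω : Type) [Field Ω] [Algebra F Ω] (A : Subalgebra F Ω)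
    (h2 : 2 ≤ Module.finrank F A) :
    ∃ α : A, ∀ c : A, c ≠ 0 → ∀ x y : F, x • c + y • (α * c) = 0 → x = 0 ∧ y = 0 := by
  have hne : Submodule.span F {(1 : A)} ≠ ⊤ := by
    intro h
    have h1 : Module.finrank F A = 1 := by
      rw [← finrank_top F A, ← h, finrank_span_singleton (one_ne_zero)]
    omega
  obtain ⟨α, hα⟩ : ∃ α : A, α ∉ Submodule.span F {(1 : A)} := by
    by_contra h
    push_neg at h
    exact hne (Submodule.eq_top_iff'.2 h)
  refine ⟨α, fun c hc x y hxy => ?_⟩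
  have hΩ : (x • (1 : Ω) + y • (α : Ω)) * (c : Ω) = 0 := by
    have := congrArg (Subtype.val) hxy
    push_cast at this
    rw [add_mul, smul_mul_assoc, smul_mul_assoc, one_mul]
    exact_mod_cast this
  have hc' : (c : Ω) ≠ 0 := fun h => hc (Subtype.ext h)
  have hsum : x • (1 : Ω) + y • (α : Ω) = 0 := by
    rcases mul_eq_zero.1 hΩ with h | h
    · exact h
    · exact absurd h hc'
  rw [Algebra.smul_def, Algebra.smul_def, mul_one] at hsum
  by_cases hy : y = 0
  · subst hy
    simp only [map_zero, zero_mul, add_zero] at hsum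
    exact ⟨(_root_.map_eq_zero (algebraMap F Ω)).1 hsum, rfl⟩
  · exfalso
    apply hα
    have hy' : algebraMap F Ω y ≠ 0 := by
      simpa using hy
    have hval : (α : Ω) = algebraMap F Ω (-(x / y)) := by
      rw [map_neg, map_div₀, ← neg_div, eq_div_iff hy']
      linear_combination hsum
    have hαA : α = (-(x / y)) • (1 : A) := by
      apply Subtype.ext
      simp only [SetLike.val_smul, OneMemClass.coe_one, Algebra.smul_def, mul_one]
      exact hval
    rw [hαA]
    exact Submodule.smul_mem _ _ (Submodule.mem_span_singleton_self _)

section Step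

variable (A : Type) [CommRing A] [Algebra F A] [FiniteDimensional F A] [Fintype A] (α : A)

/-- the linear map `(x,y) ↦ ((x,y), x•a + y•(α*a))`. -/
noncomputable def Lmap (a : A) : (F × F) →ₗ[F] (F × F) × A :=
  LinearMap.prod LinearMap.id
    ((LinearMap.fst F F F).smulRight a + (LinearMap.snd F F F).smulRight (α * a))

lemma Lmap_apply (a : A) (x y : F) :
    Lmap F A α a (x, y) = ((x, y), x • a + y • (α * a)) := rfl

lemma Lmap_inj (a : A) : Function.Injective (Lmap F A α a) := by
  intro u v h
  have := congrArg Prod.fst h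
  exact this

noncomputable def Uline (a : A) : Submodule F ((F × F) × A) := LinearMap.range (Lmap F A α a)

lemma mem_Uline (a : A) (w : (F × F) × A) :
    w ∈ Uline F A α a ↔ ∃ x y : F, w = ((x, y), x • a + y • (α * a)) := by
  constructor
  · rintro ⟨⟨x, y⟩, rfl⟩
    exact ⟨x, y, rfl⟩
  · rintro ⟨x, y, rfl⟩
    exact ⟨(x, y), rfl⟩

lemma Uline_finrank (a : A) : Module.finrank F (Uline F A α a) = 2 := by
  rw [Uline, LinearMap.finrank_range_of_inj (Lmap_inj F A α a)]
  simp [Module.finrank_prod]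

lemma Uline_inf (hkey : ∀ c : A, c ≠ 0 → ∀ x y : F, x • c + y • (α * c) = 0 → x = 0 ∧ y = 0)
    (a b : A) (hab : a ≠ b) : Uline F A α a ⊓ Uline F A α b = ⊥ := by
  rw [eq_bot_iff]
  rintro w ⟨hwa, hwb⟩
  rw [SetLike.mem_coe, mem_Uline] at hwa
  rw [SetLike.mem_coe, mem_Uline] at hwb
  obtain ⟨x, y, rfl⟩ := hwa
  obtain ⟨x', y', hw⟩ := hwb
  have h1 : x = x' ∧ y = y' := by
    have := congrArg Prod.fst hw
    simp only [Prod.mk.injEq] at this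
    exact ⟨this.1, this.2⟩
  obtain ⟨rfl, rfl⟩ := h1
  have h2 : x • a + y • (α * a) = x • b + y • (α * b) := by
    have := congrArg Prod.snd hw
    simpa using this
  have h3 : x • (a - b) + y • (α * (a - b)) = 0 := by
    rw [smul_sub, mul_sub, smul_sub]
    abel_nf
    linear_combination (norm := abel) h2
  obtain ⟨hx, hy⟩ := hkey (a - b) (sub_ne_zero.2 hab) x y h3
  subst hx; subst hy
  simp only [Submodule.mem_bot]
  simp

lemma Uline_inf_inr (a : A) (U' : Submodule F A) :
    Uline F A α a ⊓ Submodule.map (LinearMap.inr F (F × F) A) U' = ⊥ := by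
  rw [eq_bot_iff]
  rintro w ⟨hwa, hwb⟩
  rw [SetLike.mem_coe, mem_Uline] at hwa
  rw [SetLike.mem_coe] at hwb
  obtain ⟨x, y, rfl⟩ := hwa
  obtain ⟨u, hu, hw⟩ := hwb
  have h1 : x = 0 ∧ y = 0 := by
    have := (congrArg Prod.fst hw).symm
    simp only [LinearMap.inr_apply, Prod.ext_iff] at this
    simpa using this
  obtain ⟨rfl, rfl⟩ := h1
  simp only [Submodule.mem_bot]
  simp

end Step

/-- A partial spread structure: a finset of 2-dim subspaces pairwise intersecting trivially. -/
def IsSpread (V : Type) [AddCommGroup V] [Module F V] (S : Finset (Submodule F V)) : Prop :=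
  (∀ U ∈ S, Module.finrank F U = 2) ∧ (∀ U ∈ S, ∀ U' ∈ S, U ≠ U' → U ⊓ U' = ⊥)

lemma spread_congr {V W : Type} [AddCommGroup V] [Module F V] [AddCommGroup W] [Module F W]
    (e : V ≃ₗ[F] W) (S : Finset (Submodule F V)) (hS : IsSpread F V S) :
    ∃ T : Finset (Submodule F W), T.card = S.card ∧ IsSpread F W T := by
  classical
  refine ⟨S.image (Submodule.map (e : V →ₗ[F] W)), ?_, ?_, ?_⟩
  · exact Finset.card_image_of_injective _ (Submodule.map_injective_of_injective e.injective)
  · intro U hU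
    simp only [Finset.mem_image] at hU
    obtain ⟨U', hU', rfl⟩ := hU
    rw [← hS.1 U' hU']
    exact (LinearEquiv.finrank_eq (Submodule.equivMapOfInjective _ e.injective U')).symm
  · intro U hU U'' hU'' hne
    simp only [Finset.mem_image] at hU hU''
    obtain ⟨U1, hU1, rfl⟩ := hU
    obtain ⟨U2, hU2, rfl⟩ := hU''
    have h12 : U1 ≠ U2 := fun h => hne (by rw [h])
    rw [← Submodule.map_inf (e : V →ₗ[F] W) e.injective, hS.2 U1 hU1 U2 hU2 h12,
      Submodule.map_bot]

lemma exists_dim2 (V : Type) [AddCommGroup V] [Module F V] [FiniteDimensional F V]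
    (h : 2 ≤ Module.finrank F V) : ∃ U : Submodule F V, Module.finrank F U = 2 := by
  have b := finBasis F V
  set f : Fin 2 → V := fun i => b (Fin.castLE h i) with hf
  have hli : LinearIndependent F f :=
    b.linearIndependent.comp _ (Fin.castLE_injective h)
  refine ⟨Submodule.span F (Set.range f), ?_⟩
  rw [finrank_span_eq_card hli]
  simp

lemma step_spread (A : Type) [CommRing A] [Algebra F A] [FiniteDimensional F A] [Fintype A]
    (α : A) (hkey : ∀ c : A, c ≠ 0 → ∀ x y : F, x • c + y • (α * c) = 0 → x = 0 ∧ y = 0)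
    (S' : Finset (Submodule F A)) (hS' : IsSpread F A S') :
    ∃ S : Finset (Submodule F ((F × F) × A)),
      S.card = Fintype.card A + S'.card ∧ IsSpread F ((F × F) × A) S := by
  classical
  set ι : A →ₗ[F] (F × F) × A := LinearMap.inr F (F × F) A with hι
  have hιinj : Function.Injective ι := LinearMap.inr_injective
  have hUne : ∀ a : A, Uline F A α a ≠ ⊥ := by
    intro a h
    have := Uline_finrank F A α a
    rw [h, finrank_bot] at this
    omega
  have hmapdim : ∀ U' ∈ S', Module.finrank F (Submodule.map ι U') = 2 := by
    intro U' hU'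
    rw [← hS'.1 U' hU']
    exact (LinearEquiv.finrank_eq (Submodule.equivMapOfInjective _ hιinj U')).symm
  have hdisj : ∀ (a : A), ∀ U' ∈ S', Uline F A α a ≠ Submodule.map ι U' := by
    intro a U' hU' h
    apply hUne a
    have := Uline_inf_inr F A α a U'
    rw [← h, inf_idem] at this
    exact this
  refine ⟨(Finset.univ.image fun a : A => Uline F A α a) ∪ S'.image (Submodule.map ι),
    ?_, ?_, ?_⟩
  · rw [Finset.card_union_of_disjoint, Finset.card_image_of_injective,
      Finset.card_image_of_injective, Finset.card_univ]
    · exact Submodule.map_injective_of_injective hιinj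
    · intro a b hab
      simp only at hab
      by_contra hne
      apply hUne b
      have := Uline_inf F A α hkey a b hne
      rw [hab, inf_idem] at this
      exact this
    · rw [Finset.disjoint_left]
      intro U hU hU'
      simp only [Finset.mem_image, Finset.mem_univ, true_and] at hU hU'
      obtain ⟨a, rfl⟩ := hU
      obtain ⟨U', hU', h⟩ := hU'
      exact hdisj a U' hU' h.symm
  · intro U hU
    simp only [Finset.mem_union, Finset.mem_image, Finset.mem_univ, true_and] at hU
    rcases hU with ⟨a, rfl⟩ | ⟨U', hU', rfl⟩
    · exact Uline_finrank F A α a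
    · exact hmapdim U' hU'
  · intro U hU U'' hU'' hne
    simp only [Finset.mem_union, Finset.mem_image, Finset.mem_univ, true_and] at hU hU''
    rcases hU with ⟨a, rfl⟩ | ⟨U1, hU1, rfl⟩ <;>
      rcases hU'' with ⟨b, rfl⟩ | ⟨U2, hU2, rfl⟩
    · exact Uline_inf F A α hkey a b (fun h => hne (by rw [h]))
    · exact Uline_inf_inr F A α a U2
    · rw [inf_comm]
      exact Uline_inf_inr F A α b U1
    · have h12 : U1 ≠ U2 := fun h => hne (by rw [h])
      rw [← Submodule.map_inf ι hιinj, hS'.2 U1 hU1 U2 hU2 h12, Submodule.map_bot]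

lemma exists_spread (t : ℕ) :
    ∀ (V : Type) [AddCommGroup V] [Module F V] [FiniteDimensional F V],
      Module.finrank F V = 2 * t + 3 →
      ∃ S : Finset (Submodule F V),
        S.card = 1 + ∑ i ∈ Finset.range t, Fintype.card F ^ (2 * i + 3) ∧ IsSpread F V S := by
  induction t with
  | zero =>
    intro V _ _ _ hdim
    obtain ⟨U, hU⟩ := exists_dim2 F V (by omega)
    refine ⟨{U}, by simp, ?_, ?_⟩
    · intro U' hU'
      simp only [Finset.mem_singleton] at hU'
      subst hU'
      exact hU
    · intro U1 h1 U2 h2 hne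
      simp only [Finset.mem_singleton] at h1 h2
      subst h1; subst h2
      exact absurd rfl hne
  | succ t ih =>
    intro V _ _ _ hdim
    set m := 2 * t + 3 with hm
    haveI : Fintype (fixedAlg F m) := fixedAlgFintype F m (by omega)
    haveI : Module.Finite F (fixedAlg F m) := Module.Finite.of_finite
    have hfr : Module.finrank F (fixedAlg F m) = m := fixedAlg_finrank F m (by omega)
    obtain ⟨α, hkey⟩ := exists_alpha F (AlgebraicClosure F) (fixedAlg F m) (by omega)
    obtain ⟨S', hS'card, hS'⟩ := ih (fixedAlg F m) hfr
    obtain ⟨S, hScard, hS⟩ := step_spread F (fixedAlg F m) α hkey S' hS'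
    have hfrprod : Module.finrank F ((F × F) × (fixedAlg F m)) = 2 * (t + 1) + 3 := by
      rw [Module.finrank_prod, Module.finrank_prod, Module.finrank_self, hfr]
      omega
    have e : ((F × F) × (fixedAlg F m)) ≃ₗ[F] V :=
      LinearEquiv.ofFinrankEq _ _ (by rw [hfrprod, hdim])
    obtain ⟨T, hTcard, hT⟩ := spread_congr F e S hS
    refine ⟨T, ?_, hT⟩
    rw [hTcard, hScard, hS'card, fixedAlg_card' F m (by omega), Finset.sum_range_succ, hm]
    omega

end Aux

/-- for odd `v ≥ 3`, `A_q(v,4;2) ≥ 1 + q^3 + q^5 + ... + q^{v-2}`. -/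
theorem stmt_15 (q : ℕ) (F : Type) [Field F] [Fintype F] (hq : Fintype.card F = q)
    (v : ℕ) (hv : 3 ≤ v) (hvodd : Odd v) :
    1 + ∑ i ∈ Finset.range ((v - 3) / 2), q ^ (2 * i + 3) ≤ Aq F v 4 2 := by
  classical
  subst hq
  -- get the spread
  obtain ⟨k, hk⟩ := hvodd
  have hkpos : 1 ≤ k := by omega
  have hveq : v = 2 * (k - 1) + 3 := by omega
  have hdim : Module.finrank F (Fin v → F) = 2 * (k - 1) + 3 := by
    rw [Module.finrank_pi]
    simpa using hveq
  obtain ⟨S, hScard, hSdim, hSinf⟩ := exists_spread F (k - 1) (Fin v → F) hdim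
  have hrange : (v - 3) / 2 = k - 1 := by omega
  -- S is a CD code
  have hcode : IsCDCode F v 2 4 S := by
    refine ⟨hSdim, fun U hU U' hU' hne => ?_⟩
    have hinf : U ⊓ U' = ⊥ := hSinf U hU U' hU' hne
    have hsum := Submodule.finrank_sup_add_finrank_inf_eq U U'
    rw [hinf, finrank_bot, add_zero, hSdim U hU, hSdim U' hU'] at hsum
    unfold subspaceDist
    rw [hinf, finrank_bot, hsum]
  -- conclude
  haveI : Finite (Submodule F (Fin v → F)) :=
    Finite.of_injective _ (SetLike.coe_injective (A := Submodule F (Fin v → F)))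
  haveI : Fintype (Submodule F (Fin v → F)) := Fintype.ofFinite _
  have hbdd : BddAbove {n | ∃ C : Finset (Submodule F (Fin v → F)),
      C.card = n ∧ IsCDCode F v 2 4 C} := by
    refine ⟨Fintype.card (Submodule F (Fin v → F)), fun n hn => ?_⟩
    obtain ⟨C, hC, -⟩ := hn
    rw [← hC]
    exact Finset.card_le_univ C
  have hmem : (1 + ∑ i ∈ Finset.range ((v - 3) / 2), Fintype.card F ^ (2 * i + 3)) ∈
      {n | ∃ C : Finset (Submodule F (Fin v → F)), C.card = n ∧ IsCDCode F v 2 4 C} := by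
    refine ⟨S, ?_, hcode⟩
    rw [hScard, hrange]
  exact le_csSup hbdd hmem
end
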